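/- arXiv:2006.13659 — 3 statements merged into one kernel-verified Lean document; each statement's English description precedes it below -/
import Mathlib

section
/- Theorem 4, part 1 (Truth learning with self-awareness when θ_TX ≠ θ₀). Suppose the agents run the partial-information algorithm with self-awareness with transmitted hypothesis θ_TX ≠ θ₀, and assume Assumptions 1 and 2. If d_ave(θ_TX) > (1/(H−1)) Σ_{τ ≠ θ_TX} d_ave(τ), then for every agent k, μ_{k,i}(θ_TX) → 0 almost surely. -/
open MeasureTheory ProbabilityTheory Filter Topology

/-- log of average is at least average of logs (AM-GM). -/
lemma log_avg_ge {ι : Type*} (s : Finset ι) (hs : s.Nonempty) (z : ι → ℝ)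
    (hz : ∀ i ∈ s, 0 < z i) :
    (s.card : ℝ)⁻¹ * ∑ i ∈ s, Real.log (z i) ≤
      Real.log ((∑ i ∈ s, z i) / s.card) := by
  have hc : (0:ℝ) < s.card := by exact_mod_cast Finset.card_pos.2 hs
  have hgm := Real.geom_mean_le_arith_mean_weighted s (fun _ => (s.card : ℝ)⁻¹) z
    (fun i _ => by positivity) (by simp [Finset.sum_const, mul_comm]; field_simp) 
    (fun i hi => (hz i hi).le)
  have hprodpos : 0 < ∏ i ∈ s, z i ^ ((s.card : ℝ)⁻¹) := by
    apply Finset.prod_pos; intro i hi; exact Real.rpow_pos_of_pos (hz i hi) _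
  have h1 : Real.log (∏ i ∈ s, z i ^ ((s.card : ℝ)⁻¹)) =
      (s.card : ℝ)⁻¹ * ∑ i ∈ s, Real.log (z i) := by
    rw [Real.log_prod (fun i hi => (Real.rpow_pos_of_pos (hz i hi) _).ne')]
    rw [Finset.mul_sum]
    exact Finset.sum_congr rfl fun i hi => by
      rw [Real.log_rpow (hz i hi)]
  have h2 : (∑ i ∈ s, (s.card : ℝ)⁻¹ * z i) = (∑ i ∈ s, z i) / s.card := by
    rw [← Finset.mul_sum]; ring
  calc (s.card : ℝ)⁻¹ * ∑ i ∈ s, Real.log (z i) = Real.log (∏ i ∈ s, z i ^ ((s.card : ℝ)⁻¹)) := h1.symm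
    _ ≤ Real.log (∑ i ∈ s, (s.card : ℝ)⁻¹ * z i) := Real.log_le_log hprodpos hgm
    _ = Real.log ((∑ i ∈ s, z i) / s.card) := by rw [h2]

/-- If f i / i → L > 0 then f → ∞. -/
lemma tendsto_atTop_of_div_nat {f : ℕ → ℝ} {L : ℝ} (hL : 0 < L)
    (h : Tendsto (fun i : ℕ => f i / i) atTop (𝓝 L)) :
    Tendsto f atTop atTop := by
  have hev : ∀ᶠ i : ℕ in atTop, L / 2 ≤ f i / i :=
    h.eventually (eventually_ge_nhds (by linarith))
  have hlin : Tendsto (fun i : ℕ => L / 2 * (i : ℝ)) atTop atTop :=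
    Tendsto.const_mul_atTop (by linarith) tendsto_natCast_atTop_atTop
  apply tendsto_atTop_mono' _ _ hlin
  filter_upwards [hev, eventually_ge_atTop 1] with i hi hi1
  have hipos : (0:ℝ) < i := by exact_mod_cast hi1
  calc L / 2 * (i:ℝ) ≤ f i / i * i := by
        apply mul_le_mul_of_nonneg_right hi hipos.le
    _ = f i := by field_simp

/-- If V i / i → c then (V (i+n) - V i)/i → 0. -/
lemma diff_div_tendsto_zero {V : ℕ → ℝ} {c : ℝ} (n : ℕ)
    (h : Tendsto (fun i : ℕ => V i / i) atTop (𝓝 c)) :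
    Tendsto (fun i : ℕ => (V (i + n) - V i) / i) atTop (𝓝 0) := by
  have h1 : Tendsto (fun i : ℕ => V (i + n) / (i + n : ℝ)) atTop (𝓝 c) := by
    have := h.comp (tendsto_add_atTop_nat n)
    convert this using 2 with i
    simp [Function.comp]
  have h2 : Tendsto (fun i : ℕ => ((i:ℝ) + n) / i) atTop (𝓝 1) := by
    have : (fun i : ℕ => ((i:ℝ) + n) / i) =ᶠ[atTop] fun i : ℕ => 1 + n * (i:ℝ)⁻¹ := by
      filter_upwards [eventually_ge_atTop 1] with i hi
      have : (i:ℝ) ≠ 0 := by positivity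
      field_simp
    rw [tendsto_congr' this]
    have : Tendsto (fun i : ℕ => (i:ℝ)⁻¹) atTop (𝓝 0) := tendsto_inv_atTop_zero.comp tendsto_natCast_atTop_atTop
    have := (this.const_mul (n:ℝ)).const_add 1
    simpa using this
  have h3 : Tendsto (fun i : ℕ => V (i + n) / (i + n : ℝ) * (((i:ℝ) + n) / i) - V i / i)
      atTop (𝓝 (c * 1 - c)) := ((h1.mul h2).sub h)
  have heq : (fun i : ℕ => V (i + n) / (i + n : ℝ) * (((i:ℝ) + n) / i) - V i / i)
      =ᶠ[atTop] fun i : ℕ => (V (i + n) - V i) / i := by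
    filter_upwards [eventually_ge_atTop 1] with i hi
    have hi0 : (i:ℝ) ≠ 0 := by
      have : (0:ℝ) < i := by exact_mod_cast hi
      exact this.ne'
    have hin0 : (i:ℝ) + n ≠ 0 := by positivity
    field_simp
  have := h3.congr' heq
  simpa using this

/-- If m satisfies the contraction-type recursion with diverging forcing, m → ∞. -/
lemma tendsto_atTop_of_contract_rec {δ : ℝ} (hδ0 : 0 < δ) (hδ1 : δ ≤ 1) {n : ℕ} (hn : 0 < n)
    (m b : ℕ → ℝ) (hrec : ∀ i, (1 - δ) * m i + b i ≤ m (i + n))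
    (hb : Tendsto b atTop atTop) : Tendsto m atTop atTop := by
  have hδ' : 0 ≤ 1 - δ := by linarith
  have hδ'' : 1 - δ < 1 := by linarith
  rw [tendsto_atTop]
  intro C0
  set C := C0 + 1 with hC
  -- choose J with b i ≥ δ * C for i ≥ J
  obtain ⟨J, hJ⟩ := (tendsto_atTop.1 hb (δ * C)).exists_forall_of_atTop
  -- geometric decay of C - m along arithmetic progressions
  have key : ∀ s, J ≤ s → ∀ t, C - m (s + t * n) ≤ (1 - δ) ^ t * (C - m s) := by
    intro s hs t
    induction t with
    | zero => simp
    | succ t ih =>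
      have hb' : δ * C ≤ b (s + t * n) := hJ _ (le_trans hs (Nat.le_add_right _ _))
      have hr := hrec (s + t * n)
      have : C - m (s + t * n + n) ≤ (1 - δ) * (C - m (s + t * n)) := by nlinarith
      calc C - m (s + (t + 1) * n) = C - m (s + t * n + n) := by ring_nf
        _ ≤ (1 - δ) * (C - m (s + t * n)) := this
        _ ≤ (1 - δ) * ((1 - δ) ^ t * (C - m s)) := by
            exact mul_le_mul_of_nonneg_left ih hδ'
        _ = (1 - δ) ^ (t + 1) * (C - m s) := by ring
  -- min of m over the window [J, J+n-1]
  have hne : (Finset.Icc J (J + n - 1)).Nonempty := by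
    exact ⟨J, Finset.mem_Icc.2 ⟨le_rfl, by omega⟩⟩
  set M := (Finset.Icc J (J + n - 1)).inf' hne m with hM
  set R := max 0 (C - M) with hR
  have hR0 : 0 ≤ R := le_max_left _ _
  -- choose T with (1-δ)^T * R ≤ 1
  obtain ⟨T, hT⟩ : ∃ T, (1 - δ) ^ T * R ≤ 1 := by
    have hpow : Tendsto (fun t : ℕ => (1 - δ) ^ t * R) atTop (𝓝 (0 * R)) :=
      (tendsto_pow_atTop_nhds_zero_of_lt_one hδ' hδ'').mul_const R
    rw [zero_mul] at hpow
    exact ((hpow.eventually (eventually_le_nhds one_pos)).exists)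
  refine eventually_atTop.2 ⟨J + n * T, fun i hi => ?_⟩
  -- decompose i = s + t * n with s ∈ [J, J+n-1], t ≥ T
  set s := J + (i - J) % n with hs
  set t := (i - J) / n with ht
  have hiJ : J ≤ i := le_trans (Nat.le_add_right _ _) hi
  have hdecomp : i = s + t * n := by
    rw [hs, ht, mul_comm]
    have h := Nat.div_add_mod (i - J) n
    omega
  have hsJ : J ≤ s := Nat.le_add_right _ _
  have hsmem : s ∈ Finset.Icc J (J + n - 1) := by
    refine Finset.mem_Icc.2 ⟨hsJ, ?_⟩
    have := Nat.mod_lt (i - J) hn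
    omega
  have htT : T ≤ t := by
    rw [ht, Nat.le_div_iff_mul_le hn, mul_comm]
    omega
  have h1 : C - m i ≤ (1 - δ) ^ t * (C - m s) := hdecomp ▸ key s hsJ t
  have h2 : (1 - δ) ^ t * (C - m s) ≤ (1 - δ) ^ t * R := by
    apply mul_le_mul_of_nonneg_left _ (pow_nonneg hδ' t)
    have : M ≤ m s := Finset.inf'_le m hsmem
    calc C - m s ≤ C - M := by linarith
      _ ≤ R := le_max_right _ _
  have h3 : (1 - δ) ^ t * R ≤ (1 - δ) ^ T * R := by
    apply mul_le_mul_of_nonneg_right _ hR0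
    exact pow_le_pow_of_le_one hδ' (by linarith) htT
  have : C - m i ≤ 1 := le_trans h1 (le_trans h2 (le_trans h3 hT))
  linarith [hC ▸ this]

theorem truth_learning_with_self_awareness_false_tx
    {Ω : Type} [mΩ : MeasurableSpace Ω] (P : Measure Ω) [IsProbabilityMeasure P]
    (K H : ℕ) (hK : 0 < K) (hH : 2 ≤ H)
    (X : Fin K → Type) [∀ k, MeasurableSpace (X k)]
    (ν : ∀ k, Measure (X k))
    (L : ∀ k : Fin K, Fin H → X k → ℝ)
    (θ0 : Fin H)
    (hLpos : ∀ k θ x, 0 < L k θ x)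
    (hLmeas : ∀ k θ, Measurable (L k θ))
    (hLdens : ∀ k θ, ∫ x, L k θ x ∂(ν k) = 1)
    (ξ : ∀ k : Fin K, ℕ → Ω → X k)
    (hξmeas : ∀ k i, Measurable (ξ k i))
    (hξdist : ∀ k (i : ℕ), 1 ≤ i →
      Measure.map (ξ k i) P = (ν k).withDensity (fun x => ENNReal.ofReal (L k θ0 x)))
    (hξindep : iIndepFun
      (fun (i : ℕ) (ω : Ω) (k : Fin K) => ξ k (i + 1) ω) P)
    (hKL : ∀ k θ θ',
      Integrable (fun x => L k θ x * Real.log (L k θ x / L k θ' x)) (ν k))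
    (a : Fin K → Fin K → ℝ)
    (ha_nonneg : ∀ ℓ k, 0 ≤ a ℓ k)
    (ha_stoch : ∀ k, ∑ ℓ, a ℓ k = 1)
    (ha_prim : ∃ n : ℕ, ∀ ℓ k, 0 < ((Matrix.of a) ^ n) ℓ k)
    (v : Fin K → ℝ)
    (hv_pos : ∀ ℓ, 0 < v ℓ)
    (hv_sum : ∑ ℓ, v ℓ = 1)
    (hv_eig : ∀ ℓ, ∑ k, a ℓ k * v k = v ℓ)
    (ha_self : ∀ k, 0 < a k k)
    (θTX : Fin H)
    (hθTX : θTX ≠ θ0)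
    (μb ψ ψh : Fin K → ℕ → Fin H → Ω → ℝ)
    (μinit : Fin K → Fin H → ℝ)
    (hμinit_pos : ∀ k θ, 0 < μinit k θ)
    (hμinit_sum : ∀ k, ∑ θ, μinit k θ = 1)
    (hμb0 : ∀ k θ ω, μb k 0 θ ω = μinit k θ)
    (hψ : ∀ k (i : ℕ) θ ω, ψ k (i + 1) θ ω =
      μb k i θ ω * L k θ (ξ k (i + 1) ω) /
        ∑ θ', μb k i θ' ω * L k θ' (ξ k (i + 1) ω))
    (hψh_tx : ∀ k (i : ℕ) ω, ψh k (i + 1) θTX ω = ψ k (i + 1) θTX ω)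
    (hψh_ntx : ∀ k (i : ℕ) θ ω, θ ≠ θTX →
      ψh k (i + 1) θ ω = (1 - ψ k (i + 1) θTX ω) / ((H : ℝ) - 1))
    (hcomb : ∀ k (i : ℕ) θ ω, μb k (i + 1) θ ω =
      Real.exp (a k k * Real.log (ψ k (i + 1) θ ω) +
          ∑ ℓ ∈ Finset.univ.erase k, a ℓ k * Real.log (ψh ℓ (i + 1) θ ω)) /
        ∑ θ', Real.exp (a k k * Real.log (ψ k (i + 1) θ' ω) +
          ∑ ℓ ∈ Finset.univ.erase k, a ℓ k * Real.log (ψh ℓ (i + 1) θ' ω)))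
    (hgap : (1 / ((H : ℝ) - 1)) * ∑ τ ∈ Finset.univ.erase θTX, (∑ m, v m * (∫ ω, Real.log (L m θ0 (ξ m 1 ω) / L m τ (ξ m 1 ω)) ∂P))
      < (∑ m, v m * (∫ ω, Real.log (L m θ0 (ξ m 1 ω) / L m θTX (ξ m 1 ω)) ∂P))) :
    ∀ k : Fin K, ∀ᵐ ω ∂P,
      Tendsto (fun (i : ℕ) => μb k i θTX ω) atTop (𝓝 0) := by
  intro k
  have hKne : Nonempty (Fin K) := ⟨⟨0, hK⟩⟩
  have hH1 : (0:ℝ) < (H:ℝ) - 1 := by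
    have : (2:ℝ) ≤ (H:ℝ) := by exact_mod_cast hH
    linarith
  set s : Finset (Fin H) := Finset.univ.erase θTX with hs_def
  have hθ0s : θ0 ∈ s := Finset.mem_erase.2 ⟨Ne.symm hθTX, Finset.mem_univ _⟩
  have hsne : s.Nonempty := ⟨θ0, hθ0s⟩
  have hcard : (s.card : ℝ) = (H:ℝ) - 1 := by
    rw [hs_def, Finset.card_erase_of_mem (Finset.mem_univ _), Finset.card_univ,
      Fintype.card_fin]
    have : 1 ≤ H := by omega
    push_cast [Nat.cast_sub this]
    ring
  -- positivity of beliefs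
  have hμb_pos : ∀ (i : ℕ) ℓ θ ω, 0 < μb ℓ i θ ω := by
    intro i
    induction i with
    | zero => intro ℓ θ ω; rw [hμb0]; exact hμinit_pos ℓ θ
    | succ i ih =>
      intro ℓ θ ω
      rw [hcomb]
      exact div_pos (Real.exp_pos _)
        (Finset.sum_pos (fun θ' _ => Real.exp_pos _) ⟨θ, Finset.mem_univ _⟩)
  have hμb_le1 : ∀ (i : ℕ) ℓ θ ω, μb ℓ i θ ω ≤ 1 := by
    intro i ℓ θ ω
    cases i with
    | zero =>
      rw [hμb0]
      rw [← hμinit_sum ℓ]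
      exact Finset.single_le_sum (fun θ' _ => (hμinit_pos ℓ θ').le) (Finset.mem_univ θ)
    | succ i =>
      rw [hcomb]
      rw [div_le_one (Finset.sum_pos (fun θ' _ => Real.exp_pos _) ⟨θ, Finset.mem_univ _⟩)]
      exact Finset.single_le_sum (f := fun θ' => Real.exp (a ℓ ℓ * Real.log (ψ ℓ (i + 1) θ' ω) +
        ∑ ℓ' ∈ Finset.univ.erase ℓ, a ℓ' ℓ * Real.log (ψh ℓ' (i + 1) θ' ω)))
        (fun θ' _ => (Real.exp_pos _).le) (Finset.mem_univ θ)
  -- facts about ψ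
  have hψ_pos : ∀ ℓ (i : ℕ) θ ω, 0 < ψ ℓ (i+1) θ ω := by
    intro ℓ i θ ω
    rw [hψ]
    exact div_pos (mul_pos (hμb_pos i ℓ θ ω) (hLpos ℓ θ _))
      (Finset.sum_pos (fun θ' _ => mul_pos (hμb_pos i ℓ θ' ω) (hLpos ℓ θ' _))
        ⟨θ, Finset.mem_univ _⟩)
  have hψ_sum : ∀ ℓ (i : ℕ) ω, ∑ θ, ψ ℓ (i+1) θ ω = 1 := by
    intro ℓ i ω
    have hden : 0 < ∑ θ', μb ℓ i θ' ω * L ℓ θ' (ξ ℓ (i+1) ω) :=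
      Finset.sum_pos (fun θ' _ => mul_pos (hμb_pos i ℓ θ' ω) (hLpos ℓ θ' _))
        ⟨θTX, Finset.mem_univ _⟩
    calc ∑ θ, ψ ℓ (i+1) θ ω
        = (∑ θ, μb ℓ i θ ω * L ℓ θ (ξ ℓ (i+1) ω)) /
            (∑ θ', μb ℓ i θ' ω * L ℓ θ' (ξ ℓ (i+1) ω)) := by
          rw [Finset.sum_div]
          exact Finset.sum_congr rfl fun θ _ => hψ ℓ i θ ω
      _ = 1 := div_self hden.ne'
  have hψTX_lt : ∀ ℓ (i : ℕ) ω, ψ ℓ (i+1) θTX ω < 1 := by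
    intro ℓ i ω
    have h1 := hψ_sum ℓ i ω
    rw [← Finset.add_sum_erase _ _ (Finset.mem_univ θTX)] at h1
    have h2 : 0 < ∑ θ ∈ s, ψ ℓ (i+1) θ ω := by
      refine Finset.sum_pos (fun θ _ => hψ_pos ℓ i θ ω) hsne
    rw [hs_def] at h2
    linarith
  have hone_sub : ∀ ℓ (i : ℕ) ω, 1 - ψ ℓ (i+1) θTX ω = ∑ θ ∈ s, ψ ℓ (i+1) θ ω := by
    intro ℓ i ω
    have h1 := hψ_sum ℓ i ω
    rw [← Finset.add_sum_erase _ _ (Finset.mem_univ θTX)] at h1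
    rw [hs_def]
    linarith
  have hψh_pos : ∀ ℓ (i : ℕ) θ ω, 0 < ψh ℓ (i+1) θ ω := by
    intro ℓ i θ ω
    by_cases hθ : θ = θTX
    · rw [hθ, hψh_tx]; exact hψ_pos ℓ i θTX ω
    · rw [hψh_ntx ℓ i θ ω hθ]
      have := hψTX_lt ℓ i ω
      exact div_pos (by linarith) hH1
  -- the log-belief-ratio and log-likelihood-ratio processes
  set lam : Fin K → ℕ → Ω → ℝ := fun ℓ i ω =>
    ((H:ℝ)-1)⁻¹ * ∑ θ ∈ s, Real.log (μb ℓ i θ ω / μb ℓ i θTX ω) with hlam_def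
  set x : Fin K → ℕ → Ω → ℝ := fun ℓ r ω =>
    ((H:ℝ)-1)⁻¹ * ∑ θ ∈ s, Real.log (L ℓ θ (ξ ℓ r ω) / L ℓ θTX (ξ ℓ r ω)) with hx_def
  -- key one-step recursion
  -- per-agent averaged log-ratios of ψ and ψh
  have claim1 : ∀ (i : ℕ) (ℓ : Fin K) ω,
      ((H:ℝ)-1)⁻¹ * ∑ θ ∈ s, (Real.log (ψ ℓ (i+1) θ ω) - Real.log (ψ ℓ (i+1) θTX ω))
        = lam ℓ i ω + x ℓ (i+1) ω := by
    intro i ℓ ω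
    have hden : (0:ℝ) < ∑ θ', μb ℓ i θ' ω * L ℓ θ' (ξ ℓ (i+1) ω) :=
      Finset.sum_pos (fun θ' _ => mul_pos (hμb_pos i ℓ θ' ω) (hLpos ℓ θ' _))
        ⟨θTX, Finset.mem_univ _⟩
    have hterm : ∀ θ ∈ s, Real.log (ψ ℓ (i+1) θ ω) - Real.log (ψ ℓ (i+1) θTX ω)
        = Real.log (μb ℓ i θ ω / μb ℓ i θTX ω)
          + Real.log (L ℓ θ (ξ ℓ (i+1) ω) / L ℓ θTX (ξ ℓ (i+1) ω)) := by
      intro θ _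
      rw [hψ ℓ i θ ω, hψ ℓ i θTX ω,
        Real.log_div (mul_pos (hμb_pos i ℓ θ ω) (hLpos ℓ θ _)).ne' hden.ne',
        Real.log_div (mul_pos (hμb_pos i ℓ θTX ω) (hLpos ℓ θTX _)).ne' hden.ne',
        Real.log_mul (hμb_pos i ℓ θ ω).ne' (hLpos ℓ θ _).ne',
        Real.log_mul (hμb_pos i ℓ θTX ω).ne' (hLpos ℓ θTX _).ne',
        Real.log_div (hμb_pos i ℓ θ ω).ne' (hμb_pos i ℓ θTX ω).ne',
        Real.log_div (hLpos ℓ θ _).ne' (hLpos ℓ θTX _).ne']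
      ring
    rw [Finset.sum_congr rfl hterm, Finset.sum_add_distrib, mul_add]
  have claim2 : ∀ (i : ℕ) (ℓ : Fin K) ω,
      lam ℓ i ω + x ℓ (i+1) ω
        ≤ ((H:ℝ)-1)⁻¹ * ∑ θ ∈ s, (Real.log (ψh ℓ (i+1) θ ω) - Real.log (ψh ℓ (i+1) θTX ω)) := by
    intro i ℓ ω
    set D : ℝ := Real.log ((∑ τ ∈ s, ψ ℓ (i+1) τ ω) / ((H:ℝ)-1))
      - Real.log (ψ ℓ (i+1) θTX ω) with hD_def
    have hsum_eq : ∑ θ ∈ s, (Real.log (ψh ℓ (i+1) θ ω) - Real.log (ψh ℓ (i+1) θTX ω))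
        = (s.card : ℝ) * D := by
      rw [Finset.sum_congr rfl (fun θ hθ => ?_), Finset.sum_const, nsmul_eq_mul]
      rw [hψh_ntx ℓ i θ ω (Finset.mem_erase.1 hθ).1, hone_sub, hψh_tx, hD_def]
    rw [hsum_eq, ← mul_assoc, hcard]
    rw [inv_mul_cancel₀ hH1.ne', one_mul]
    -- now bound lam + x by D using AM-GM for logs
    rw [← claim1 i ℓ ω]
    have havg := log_avg_ge s hsne (fun θ => ψ ℓ (i+1) θ ω) (fun θ _ => hψ_pos ℓ i θ ω)
    rw [hcard] at havg
    have hsplit : ∑ θ ∈ s, (Real.log (ψ ℓ (i+1) θ ω) - Real.log (ψ ℓ (i+1) θTX ω))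
        = (∑ θ ∈ s, Real.log (ψ ℓ (i+1) θ ω)) - (s.card : ℝ) * Real.log (ψ ℓ (i+1) θTX ω) := by
      rw [Finset.sum_sub_distrib, Finset.sum_const, nsmul_eq_mul]
    rw [hsplit, hD_def]
    rw [mul_sub, ← mul_assoc, hcard, inv_mul_cancel₀ hH1.ne', one_mul]
    linarith
  have key : ∀ (i : ℕ) (kk : Fin K) ω,
      ∑ ℓ, a ℓ kk * (lam ℓ i ω + x ℓ (i+1) ω) ≤ lam kk (i+1) ω := by
    intro i kk ω
    set G : Fin H → ℝ := fun θ => a kk kk * Real.log (ψ kk (i+1) θ ω) +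
        ∑ ℓ ∈ Finset.univ.erase kk, a ℓ kk * Real.log (ψh ℓ (i+1) θ ω) with hG_def
    have hZpos : (0:ℝ) < ∑ θ', Real.exp (G θ') :=
      Finset.sum_pos (fun _ _ => Real.exp_pos _) ⟨θTX, Finset.mem_univ _⟩
    have hlogμb : ∀ θ, Real.log (μb kk (i+1) θ ω)
        = G θ - Real.log (∑ θ', Real.exp (G θ')) := by
      intro θ
      rw [hcomb, Real.log_div (Real.exp_pos _).ne' hZpos.ne', Real.log_exp]
    have hlam1 : lam kk (i+1) ω = ((H:ℝ)-1)⁻¹ * ∑ θ ∈ s, (G θ - G θTX) := by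
      simp only [hlam_def]
      congr 1
      refine Finset.sum_congr rfl fun θ _ => ?_
      rw [Real.log_div (hμb_pos _ _ _ _).ne' (hμb_pos _ _ _ _).ne', hlogμb θ, hlogμb θTX]
      ring
    have hGsplit : lam kk (i+1) ω
        = a kk kk * (((H:ℝ)-1)⁻¹ * ∑ θ ∈ s, (Real.log (ψ kk (i+1) θ ω) - Real.log (ψ kk (i+1) θTX ω)))
          + ∑ ℓ ∈ Finset.univ.erase kk, a ℓ kk *
            (((H:ℝ)-1)⁻¹ * ∑ θ ∈ s, (Real.log (ψh ℓ (i+1) θ ω) - Real.log (ψh ℓ (i+1) θTX ω))) := by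
      rw [hlam1]
      have hGθ : ∀ θ, G θ - G θTX
          = a kk kk * (Real.log (ψ kk (i+1) θ ω) - Real.log (ψ kk (i+1) θTX ω))
            + ∑ ℓ ∈ Finset.univ.erase kk, a ℓ kk *
              (Real.log (ψh ℓ (i+1) θ ω) - Real.log (ψh ℓ (i+1) θTX ω)) := by
        intro θ
        rw [hG_def]
        simp only [mul_sub, Finset.sum_sub_distrib]
        ring
      rw [Finset.sum_congr rfl (fun θ _ => hGθ θ), Finset.sum_add_distrib, mul_add]
      congr 1
      · rw [← Finset.mul_sum]
        ring
      · rw [Finset.sum_comm, Finset.mul_sum]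
        refine Finset.sum_congr rfl fun ℓ _ => ?_
        rw [← Finset.mul_sum]
        ring
    rw [hGsplit]
    rw [← Finset.add_sum_erase _ _ (Finset.mem_univ kk)]
    have h1 : a kk kk * (lam kk i ω + x kk (i+1) ω)
        ≤ a kk kk * (((H:ℝ)-1)⁻¹ * ∑ θ ∈ s, (Real.log (ψ kk (i+1) θ ω) - Real.log (ψ kk (i+1) θTX ω))) := by
      rw [claim1 i kk ω]
    have h2 : ∑ ℓ ∈ Finset.univ.erase kk, a ℓ kk * (lam ℓ i ω + x ℓ (i+1) ω)
        ≤ ∑ ℓ ∈ Finset.univ.erase kk, a ℓ kk *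
          (((H:ℝ)-1)⁻¹ * ∑ θ ∈ s, (Real.log (ψh ℓ (i+1) θ ω) - Real.log (ψh ℓ (i+1) θTX ω))) := by
      refine Finset.sum_le_sum fun ℓ _ => ?_
      exact mul_le_mul_of_nonneg_left (claim2 i ℓ ω) (ha_nonneg ℓ kk)
    exact add_le_add h1 h2
  -- matrix power facts
  set A : Matrix (Fin K) (Fin K) ℝ := Matrix.of a with hA_def
  have hA_apply : ∀ ℓ kk, A ℓ kk = a ℓ kk := fun _ _ => rfl
  have hApow_nonneg : ∀ (m : ℕ) ℓ kk, 0 ≤ (A ^ m) ℓ kk := by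
    intro m
    induction m with
    | zero =>
      intro ℓ kk
      rw [pow_zero]
      rw [Matrix.one_apply]
      split <;> norm_num
    | succ m ih =>
      intro ℓ kk
      rw [pow_succ', Matrix.mul_apply]
      exact Finset.sum_nonneg fun j _ => mul_nonneg (ha_nonneg ℓ j) (ih j kk)
  have hApow_col : ∀ (m : ℕ) kk, ∑ ℓ, (A ^ m) ℓ kk = 1 := by
    intro m
    induction m with
    | zero =>
      intro kk
      rw [pow_zero]
      simp [Matrix.one_apply]
    | succ m ih =>
      intro kk
      have : ∀ ℓ, (A ^ (m+1)) ℓ kk = ∑ j, a ℓ j * (A ^ m) j kk := by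
        intro ℓ; rw [pow_succ', Matrix.mul_apply]; rfl
      rw [Finset.sum_congr rfl fun ℓ _ => this ℓ, Finset.sum_comm]
      calc ∑ j, ∑ ℓ, a ℓ j * (A ^ m) j kk
          = ∑ j, (A ^ m) j kk := by
            refine Finset.sum_congr rfl fun j _ => ?_
            rw [← Finset.sum_mul, ha_stoch j, one_mul]
        _ = 1 := ih kk
  -- primitivity: get n ≥ 1 with all entries of A^n positive
  obtain ⟨n₀, hn₀⟩ := ha_prim
  set n : ℕ := n₀ + 1 with hn_def
  have hn1 : 0 < n := Nat.succ_pos _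
  have hApos : ∀ ℓ kk, 0 < (A ^ n) ℓ kk := by
    intro ℓ kk
    have h1 : (A ^ n) ℓ kk = ∑ j, a ℓ j * (A ^ n₀) j kk := by
      rw [hn_def, pow_succ', Matrix.mul_apply]; rfl
    rw [h1]
    have hterm : 0 < a ℓ ℓ * (A ^ n₀) ℓ kk := mul_pos (ha_self ℓ) (hn₀ ℓ kk)
    calc (0:ℝ) < a ℓ ℓ * (A ^ n₀) ℓ kk := hterm
      _ ≤ ∑ j, a ℓ j * (A ^ n₀) j kk :=
        Finset.single_le_sum (f := fun j => a ℓ j * (A ^ n₀) j kk)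
          (fun j _ => mul_nonneg (ha_nonneg ℓ j) (hApow_nonneg n₀ j kk))
          (Finset.mem_univ ℓ)
  -- δ
  have hPne : (Finset.univ : Finset (Fin K × Fin K)).Nonempty :=
    Finset.univ_nonempty
  set δ : ℝ := Finset.univ.inf' hPne (fun p : Fin K × Fin K => (A ^ n) p.1 p.2 / v p.1)
    with hδ_def
  have hδ0 : 0 < δ := by
    rw [hδ_def, Finset.lt_inf'_iff]
    exact fun p _ => div_pos (hApos p.1 p.2) (hv_pos p.1)
  have hδle : ∀ ℓ kk, δ * v ℓ ≤ (A ^ n) ℓ kk := by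
    intro ℓ kk
    have h := Finset.inf'_le (f := fun p : Fin K × Fin K => (A ^ n) p.1 p.2 / v p.1)
      (Finset.mem_univ (ℓ, kk))
    rw [← hδ_def] at h
    calc δ * v ℓ ≤ ((A ^ n) ℓ kk / v ℓ) * v ℓ :=
          mul_le_mul_of_nonneg_right h (hv_pos ℓ).le
      _ = (A ^ n) ℓ kk := div_mul_cancel₀ _ (hv_pos ℓ).ne'
  have hδ1 : δ ≤ 1 := by
    have h1 : ∑ ℓ, δ * v ℓ ≤ ∑ ℓ, (A ^ n) ℓ k := Finset.sum_le_sum fun ℓ _ => hδle ℓ k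
    rw [hApow_col n k, ← Finset.mul_sum, hv_sum, mul_one] at h1
    exact h1
  -- noise bound
  set w : ℕ → Ω → ℝ := fun r ω => ∑ ℓ, |x ℓ r ω| with hw_def
  have hy_lb : ∀ (c : Fin K → ℝ), (∀ j, 0 ≤ c j) → (∑ j, c j = 1) →
      ∀ (r : ℕ) ω, -(w r ω) ≤ ∑ j, c j * x j r ω := by
    intro c hc hc1 r ω
    have h1 : ∀ j, -|x j r ω| ≤ c j * x j r ω := by
      intro j
      have h2 : c j * x j r ω ≥ -(c j * |x j r ω|) := by
        have := neg_abs_le (x j r ω)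
        nlinarith [hc j, abs_nonneg (x j r ω)]
      have h3 : c j * |x j r ω| ≤ |x j r ω| := by
        have hcle : c j ≤ 1 := by
          rw [← hc1]
          exact Finset.single_le_sum (fun j' _ => hc j') (Finset.mem_univ j)
        nlinarith [abs_nonneg (x j r ω)]
      linarith
    calc -(w r ω) = ∑ j, -|x j r ω| := by rw [hw_def]; simp
      _ ≤ ∑ j, c j * x j r ω := Finset.sum_le_sum fun j _ => h1 j
  -- iterated recursion
  have iter : ∀ (m i : ℕ) (kk : Fin K) ω,
      ∑ ℓ, (A ^ m) ℓ kk * lam ℓ i ω - ∑ r ∈ Finset.range m, w (i+r+1) ω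
        ≤ lam kk (i+m) ω := by
    intro m
    induction m with
    | zero =>
      intro i kk ω
      simp [Matrix.one_apply, Finset.sum_ite_eq]
    | succ m ih =>
      intro i kk ω
      have hidx : i + (m+1) = (i+1) + m := by omega
      have hIH := ih (i+1) kk ω
      have hc : ∀ j, 0 ≤ (A ^ (m+1)) j kk := fun j => hApow_nonneg (m+1) j kk
      have hc1 : ∑ j, (A ^ (m+1)) j kk = 1 := hApow_col (m+1) kk
      -- lower bound the ∑ℓ (A^m) ℓ kk * lam ℓ (i+1) term
      have hpow : ∀ j, (A ^ (m+1)) j kk = ∑ ℓ, a j ℓ * (A ^ m) ℓ kk := by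
        intro j; rw [pow_succ', Matrix.mul_apply]; rfl
      have hstep : ∑ j, (A ^ (m+1)) j kk * lam j i ω - w (i+1) ω
          ≤ ∑ ℓ, (A ^ m) ℓ kk * lam ℓ (i+1) ω := by
        have h1 : ∀ ℓ, (A ^ m) ℓ kk * (∑ j, a j ℓ * (lam j i ω + x j (i+1) ω))
            ≤ (A ^ m) ℓ kk * lam ℓ (i+1) ω := fun ℓ =>
          mul_le_mul_of_nonneg_left (key i ℓ ω) (hApow_nonneg m ℓ kk)
        have h2 : ∑ ℓ, (A ^ m) ℓ kk * (∑ j, a j ℓ * (lam j i ω + x j (i+1) ω))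
            = ∑ j, (A ^ (m+1)) j kk * (lam j i ω + x j (i+1) ω) := by
          calc ∑ ℓ, (A ^ m) ℓ kk * (∑ j, a j ℓ * (lam j i ω + x j (i+1) ω))
              = ∑ ℓ, ∑ j, (A ^ m) ℓ kk * (a j ℓ * (lam j i ω + x j (i+1) ω)) :=
                Finset.sum_congr rfl fun ℓ _ => Finset.mul_sum _ _ _
            _ = ∑ j, ∑ ℓ, (A ^ m) ℓ kk * (a j ℓ * (lam j i ω + x j (i+1) ω)) :=
                Finset.sum_comm
            _ = ∑ j, (A ^ (m+1)) j kk * (lam j i ω + x j (i+1) ω) := by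
                refine Finset.sum_congr rfl fun j _ => ?_
                rw [hpow j, Finset.sum_mul]
                exact Finset.sum_congr rfl fun ℓ _ => by ring
        have h3 := hy_lb (fun j => (A ^ (m+1)) j kk) hc hc1 (i+1) ω
        have h4 : ∑ j, (A ^ (m+1)) j kk * (lam j i ω + x j (i+1) ω)
            = ∑ j, (A ^ (m+1)) j kk * lam j i ω + ∑ j, (A ^ (m+1)) j kk * x j (i+1) ω := by
          rw [← Finset.sum_add_distrib]
          exact Finset.sum_congr rfl fun j _ => by ring
        calc ∑ j, (A ^ (m+1)) j kk * lam j i ω - w (i+1) ω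
            ≤ ∑ j, (A ^ (m+1)) j kk * lam j i ω + ∑ j, (A ^ (m+1)) j kk * x j (i+1) ω := by
              linarith
          _ = ∑ ℓ, (A ^ m) ℓ kk * (∑ j, a j ℓ * (lam j i ω + x j (i+1) ω)) := by
              rw [← h4, ← h2]
          _ ≤ ∑ ℓ, (A ^ m) ℓ kk * lam ℓ (i+1) ω := Finset.sum_le_sum fun ℓ _ => h1 ℓ
      have hW : ∑ r ∈ Finset.range (m+1), w (i+r+1) ω
          = w (i+1) ω + ∑ r ∈ Finset.range m, w ((i+1)+r+1) ω := by
        rw [Finset.sum_range_succ' (fun r => w (i+r+1) ω) m, add_comm]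
        congr 1
        exact Finset.sum_congr rfl fun r _ => congrArg (fun t => w t ω) (by omega)
      rw [hidx, hW]
      linarith [hIH, hstep]
  -- weighted average and minimum of log-ratios
  have hFKne : (Finset.univ : Finset (Fin K)).Nonempty := Finset.univ_nonempty
  set Sq : ℕ → Ω → ℝ := fun i ω => ∑ ℓ, v ℓ * lam ℓ i ω with hSq_def
  set mq : ℕ → Ω → ℝ := fun i ω => Finset.univ.inf' hFKne (fun ℓ => lam ℓ i ω) with hmq_def
  have hmq_le : ∀ (i : ℕ) ω (ℓ : Fin K), mq i ω ≤ lam ℓ i ω := by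
    intro i ω ℓ
    exact Finset.inf'_le _ (Finset.mem_univ ℓ)
  -- S recursion
  have hScum : ∀ (i : ℕ) ω,
      Sq 0 ω + ∑ r ∈ Finset.range i, (∑ ℓ, v ℓ * x ℓ (r+1) ω) ≤ Sq i ω := by
    intro i ω
    induction i with
    | zero => simp
    | succ i ih =>
      have hstep : Sq i ω + (∑ ℓ, v ℓ * x ℓ (i+1) ω) ≤ Sq (i+1) ω := by
        have h1 : ∀ kk, v kk * (∑ ℓ, a ℓ kk * (lam ℓ i ω + x ℓ (i+1) ω))
            ≤ v kk * lam kk (i+1) ω := fun kk =>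
          mul_le_mul_of_nonneg_left (key i kk ω) (hv_pos kk).le
        have h2 : ∑ kk, v kk * (∑ ℓ, a ℓ kk * (lam ℓ i ω + x ℓ (i+1) ω))
            = ∑ ℓ, v ℓ * (lam ℓ i ω + x ℓ (i+1) ω) := by
          calc ∑ kk, v kk * (∑ ℓ, a ℓ kk * (lam ℓ i ω + x ℓ (i+1) ω))
              = ∑ kk, ∑ ℓ, a ℓ kk * v kk * (lam ℓ i ω + x ℓ (i+1) ω) := by
                refine Finset.sum_congr rfl fun kk _ => ?_
                rw [Finset.mul_sum]
                exact Finset.sum_congr rfl fun ℓ _ => by ring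
            _ = ∑ ℓ, ∑ kk, a ℓ kk * v kk * (lam ℓ i ω + x ℓ (i+1) ω) := Finset.sum_comm
            _ = ∑ ℓ, v ℓ * (lam ℓ i ω + x ℓ (i+1) ω) := by
                refine Finset.sum_congr rfl fun ℓ _ => ?_
                rw [← Finset.sum_mul, hv_eig ℓ]
        have h3 : ∑ ℓ, v ℓ * (lam ℓ i ω + x ℓ (i+1) ω)
            = Sq i ω + ∑ ℓ, v ℓ * x ℓ (i+1) ω := by
          rw [hSq_def, ← Finset.sum_add_distrib]
          exact Finset.sum_congr rfl fun ℓ _ => by ring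
        calc Sq i ω + (∑ ℓ, v ℓ * x ℓ (i+1) ω)
            = ∑ kk, v kk * (∑ ℓ, a ℓ kk * (lam ℓ i ω + x ℓ (i+1) ω)) := by
              rw [h2, h3]
          _ ≤ ∑ kk, v kk * lam kk (i+1) ω := Finset.sum_le_sum fun kk _ => h1 kk
          _ = Sq (i+1) ω := rfl
      have hsum : ∑ r ∈ Finset.range (i+1), (∑ ℓ, v ℓ * x ℓ (r+1) ω)
          = (∑ r ∈ Finset.range i, (∑ ℓ, v ℓ * x ℓ (r+1) ω)) + ∑ ℓ, v ℓ * x ℓ (i+1) ω :=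
        Finset.sum_range_succ _ i
      rw [hsum]
      linarith
  -- m recursion
  have hmrec : ∀ (i : ℕ) ω,
      (1 - δ) * mq i ω + (δ * Sq i ω - ∑ r ∈ Finset.range n, w (i+r+1) ω)
        ≤ mq (i+n) ω := by
    intro i ω
    rw [hmq_def]
    refine Finset.le_inf' _ _ fun kk _ => ?_
    have h1 := iter n i kk ω
    have h2 : (1 - δ) * mq i ω + δ * Sq i ω ≤ ∑ ℓ, (A ^ n) ℓ kk * lam ℓ i ω := by
      have hdecomp : ∀ ℓ, (A ^ n) ℓ kk * lam ℓ i ω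
          = δ * (v ℓ * lam ℓ i ω) + ((A ^ n) ℓ kk - δ * v ℓ) * lam ℓ i ω := by
        intro ℓ; ring
      have h3 : ∀ ℓ, ((A ^ n) ℓ kk - δ * v ℓ) * mq i ω
          ≤ ((A ^ n) ℓ kk - δ * v ℓ) * lam ℓ i ω := fun ℓ =>
        mul_le_mul_of_nonneg_left (hmq_le i ω ℓ) (by linarith [hδle ℓ kk])
      have h4 : ∑ ℓ, ((A ^ n) ℓ kk - δ * v ℓ) = 1 - δ := by
        rw [Finset.sum_sub_distrib, hApow_col n kk, ← Finset.mul_sum, hv_sum, mul_one]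
      calc (1 - δ) * mq i ω + δ * Sq i ω
          = ∑ ℓ, ((A ^ n) ℓ kk - δ * v ℓ) * mq i ω + δ * Sq i ω := by
            rw [← Finset.sum_mul, h4]
        _ ≤ ∑ ℓ, ((A ^ n) ℓ kk - δ * v ℓ) * lam ℓ i ω + δ * Sq i ω :=
            add_le_add_left (Finset.sum_le_sum fun ℓ _ => h3 ℓ) _
        _ = ∑ ℓ, (A ^ n) ℓ kk * lam ℓ i ω := by
            rw [hSq_def, Finset.mul_sum, ← Finset.sum_add_distrib]
            exact Finset.sum_congr rfl fun ℓ _ => by ring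
    linarith
  -- ===== probabilistic part =====
  -- integrability of log-likelihood ratios
  have hlog_int : ∀ (ℓ : Fin K) (θ : Fin H),
      Integrable (fun ω => Real.log (L ℓ θ0 (ξ ℓ 1 ω) / L ℓ θ (ξ ℓ 1 ω))) P := by
    intro ℓ θ
    have hfmeas : Measurable (fun y : X ℓ => Real.log (L ℓ θ0 y / L ℓ θ y)) :=
      Real.measurable_log.comp ((hLmeas ℓ θ0).div (hLmeas ℓ θ))
    have hwd : Integrable (fun y => Real.log (L ℓ θ0 y / L ℓ θ y))
        ((ν ℓ).withDensity (fun y => ENNReal.ofReal (L ℓ θ0 y))) := by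
      rw [integrable_withDensity_iff ((hLmeas ℓ θ0).ennreal_ofReal)
        (Filter.Eventually.of_forall fun y => ENNReal.ofReal_lt_top)]
      have heq : (fun y => Real.log (L ℓ θ0 y / L ℓ θ y) * (ENNReal.ofReal (L ℓ θ0 y)).toReal)
          = fun y => L ℓ θ0 y * Real.log (L ℓ θ0 y / L ℓ θ y) := by
        funext y
        rw [ENNReal.toReal_ofReal (hLpos ℓ θ0 y).le]
        ring
      rw [heq]
      exact hKL ℓ θ0 θ
    rw [← hξdist ℓ 1 le_rfl] at hwd
    exact (integrable_map_measure hfmeas.aestronglyMeasurable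
      (hξmeas ℓ 1).aemeasurable).1 hwd
  -- pointwise rewriting of x in terms of ratios to the truth
  have hx_rw : ∀ (ℓ : Fin K) (r : ℕ) ω, x ℓ r ω
      = ((H:ℝ)-1)⁻¹ * ∑ θ ∈ s,
        (Real.log (L ℓ θ0 (ξ ℓ r ω) / L ℓ θTX (ξ ℓ r ω))
          - Real.log (L ℓ θ0 (ξ ℓ r ω) / L ℓ θ (ξ ℓ r ω))) := by
    intro ℓ r ω
    simp only [hx_def]
    congr 1
    refine Finset.sum_congr rfl fun θ _ => ?_
    rw [Real.log_div (hLpos ℓ θ _).ne' (hLpos ℓ θTX _).ne',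
      Real.log_div (hLpos ℓ θ0 _).ne' (hLpos ℓ θTX _).ne',
      Real.log_div (hLpos ℓ θ0 _).ne' (hLpos ℓ θ _).ne']
    ring
  have hx_int : ∀ ℓ, Integrable (x ℓ 1) P := by
    intro ℓ
    have : x ℓ 1 = fun ω => ((H:ℝ)-1)⁻¹ * ∑ θ ∈ s,
        (Real.log (L ℓ θ0 (ξ ℓ 1 ω) / L ℓ θTX (ξ ℓ 1 ω))
          - Real.log (L ℓ θ0 (ξ ℓ 1 ω) / L ℓ θ (ξ ℓ 1 ω))) := funext (hx_rw ℓ 1)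
    rw [this]
    exact (integrable_finset_sum s
      (fun θ _ => (hlog_int ℓ θTX).sub (hlog_int ℓ θ))).const_mul _
  -- mean of x
  set Dq : Fin K → Fin H → ℝ := fun ℓ τ =>
    ∫ ω, Real.log (L ℓ θ0 (ξ ℓ 1 ω) / L ℓ τ (ξ ℓ 1 ω)) ∂P with hDq_def
  set xm : Fin K → ℝ := fun ℓ => ∫ ω, x ℓ 1 ω ∂P with hxm_def
  have hxm : ∀ ℓ, xm ℓ = ((H:ℝ)-1)⁻¹ * ∑ θ ∈ s, (Dq ℓ θTX - Dq ℓ θ) := by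
    intro ℓ
    simp only [hxm_def, hDq_def]
    rw [integral_congr_ae (Filter.Eventually.of_forall (hx_rw ℓ 1)), integral_const_mul]
    congr 1
    rw [integral_finset_sum s (f := fun θ ω =>
      Real.log (L ℓ θ0 (ξ ℓ 1 ω) / L ℓ θTX (ξ ℓ 1 ω))
        - Real.log (L ℓ θ0 (ξ ℓ 1 ω) / L ℓ θ (ξ ℓ 1 ω)))
      (fun θ _ => (hlog_int ℓ θTX).sub (hlog_int ℓ θ))]
    exact Finset.sum_congr rfl fun θ _ =>
      integral_sub (hlog_int ℓ θTX) (hlog_int ℓ θ)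
  have hgap' : ((H:ℝ)-1)⁻¹ * ∑ τ ∈ s, ∑ m, v m * Dq m τ < ∑ m, v m * Dq m θTX := by
    simp only [hDq_def]
    rw [← one_div]
    exact hgap
  have hμbar : 0 < ∑ ℓ, v ℓ * xm ℓ := by
    have hper : ∀ ℓ, v ℓ * xm ℓ
        = v ℓ * Dq ℓ θTX - ((H:ℝ)-1)⁻¹ * ∑ θ ∈ s, v ℓ * Dq ℓ θ := by
      intro ℓ
      rw [hxm ℓ, Finset.sum_sub_distrib, Finset.sum_const, nsmul_eq_mul, hcard,
        ← Finset.mul_sum]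
      have h1 : ((H:ℝ)-1) ≠ 0 := hH1.ne'
      field_simp
    rw [Finset.sum_congr rfl fun ℓ _ => hper ℓ, Finset.sum_sub_distrib]
    have h2 : ∑ ℓ, ((H:ℝ)-1)⁻¹ * ∑ θ ∈ s, v ℓ * Dq ℓ θ
        = ((H:ℝ)-1)⁻¹ * ∑ τ ∈ s, ∑ ℓ, v ℓ * Dq ℓ τ := by
      rw [← Finset.mul_sum, Finset.sum_comm]
    rw [h2]
    linarith
  -- SLLN for x and |x|
  have hg1meas : ∀ ℓ, Measurable (fun y : X ℓ => ((H:ℝ)-1)⁻¹ *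
      ∑ θ ∈ s, Real.log (L ℓ θ y / L ℓ θTX y)) := by
    intro ℓ
    exact (Finset.measurable_sum s fun θ _ =>
      Real.measurable_log.comp ((hLmeas ℓ θ).div (hLmeas ℓ θTX))).const_mul _
  have hident : ∀ (ℓ : Fin K) (i : ℕ),
      IdentDistrib (fun ω => x ℓ (i+1) ω) (fun ω => x ℓ (0+1) ω) P P := by
    intro ℓ i
    have hbase : IdentDistrib (ξ ℓ (i+1)) (ξ ℓ 1) P P :=
      ⟨(hξmeas ℓ (i+1)).aemeasurable, (hξmeas ℓ 1).aemeasurable, by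
        rw [hξdist ℓ (i+1) (Nat.le_add_left 1 i), hξdist ℓ 1 le_rfl]⟩
    exact hbase.comp (hg1meas ℓ)
  have hident_abs : ∀ (ℓ : Fin K) (i : ℕ),
      IdentDistrib (fun ω => |x ℓ (i+1) ω|) (fun ω => |x ℓ (0+1) ω|) P P :=
    fun ℓ i => (hident ℓ i).comp measurable_abs
  have hindep : ∀ ℓ : Fin K, Pairwise (Function.onFun (IndepFun · · P) (fun i ω => x ℓ (i+1) ω)) := by
    intro ℓ
    have hgK : Measurable (fun p : ∀ j, X j => ((H:ℝ)-1)⁻¹ *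
        ∑ θ ∈ s, Real.log (L ℓ θ (p ℓ) / L ℓ θTX (p ℓ))) :=
      (hg1meas ℓ).comp (measurable_pi_apply ℓ)
    have hcomp := hξindep.comp (fun _ : ℕ => fun p : ∀ j, X j => ((H:ℝ)-1)⁻¹ *
        ∑ θ ∈ s, Real.log (L ℓ θ (p ℓ) / L ℓ θTX (p ℓ))) (fun _ => hgK)
    intro i j hij
    exact hcomp.indepFun hij
  have hindep_abs : ∀ ℓ : Fin K,
      Pairwise (Function.onFun (IndepFun · · P) (fun i ω => |x ℓ (i+1) ω|)) := by
    intro ℓ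
    have hgK : Measurable (fun p : ∀ j, X j => |((H:ℝ)-1)⁻¹ *
        ∑ θ ∈ s, Real.log (L ℓ θ (p ℓ) / L ℓ θTX (p ℓ))|) :=
      ((hg1meas ℓ).comp (measurable_pi_apply ℓ)).abs
    have hcomp := hξindep.comp (fun _ : ℕ => fun p : ∀ j, X j => |((H:ℝ)-1)⁻¹ *
        ∑ θ ∈ s, Real.log (L ℓ θ (p ℓ) / L ℓ θTX (p ℓ))|) (fun _ => hgK)
    intro i j hij
    exact hcomp.indepFun hij
  set am : Fin K → ℝ := fun ℓ => ∫ ω, |x ℓ 1 ω| ∂P with ham_def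
  have hslln : ∀ ℓ : Fin K, ∀ᵐ ω ∂P, Tendsto
      (fun i : ℕ => (∑ r ∈ Finset.range i, x ℓ (r+1) ω) / i) atTop (𝓝 (xm ℓ)) := by
    intro ℓ
    exact strong_law_ae_real (fun i ω => x ℓ (i+1) ω) (hx_int ℓ) (hindep ℓ) (hident ℓ)
  have hslln_abs : ∀ ℓ : Fin K, ∀ᵐ ω ∂P, Tendsto
      (fun i : ℕ => (∑ r ∈ Finset.range i, |x ℓ (r+1) ω|) / i) atTop (𝓝 (am ℓ)) := by
    intro ℓ
    exact strong_law_ae_real (fun i ω => |x ℓ (i+1) ω|) (hx_int ℓ).abs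
      (hindep_abs ℓ) (hident_abs ℓ)
  -- combine a.s. events and conclude
  filter_upwards [(MeasureTheory.ae_all_iff.2 hslln).and
    (MeasureTheory.ae_all_iff.2 hslln_abs)] with ω hω
  obtain ⟨h1, h2⟩ := hω
  set T1 : ℕ → ℝ := fun i => ∑ r ∈ Finset.range i, (∑ ℓ, v ℓ * x ℓ (r+1) ω) with hT1_def
  set Vt : ℕ → ℝ := fun i => ∑ r ∈ Finset.range i, w (r+1) ω with hVt_def
  set b : ℕ → ℝ := fun i => δ * (Sq 0 ω + T1 i) - (Vt (i+n) - Vt i) with hb_def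
  have hbrec : ∀ i, (1-δ) * mq i ω + b i ≤ mq (i+n) ω := by
    intro i
    have hmr := hmrec i ω
    have hVW : Vt (i+n) = Vt i + ∑ r ∈ Finset.range n, w (i+r+1) ω := by
      simp only [hVt_def]
      exact Finset.sum_range_add (fun r => w (r+1) ω) i n
    have hSc := hScum i ω
    have h3 : δ * (Sq 0 ω + T1 i) ≤ δ * Sq i ω :=
      mul_le_mul_of_nonneg_left (by simpa only [hT1_def] using hSc) hδ0.le
    simp only [hb_def]
    linarith [hmr, h3, hVW]
  have hT1div : Tendsto (fun i : ℕ => T1 i / i) atTop (𝓝 (∑ ℓ, v ℓ * xm ℓ)) := by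
    have hT1eq : ∀ i : ℕ, T1 i / i
        = ∑ ℓ, v ℓ * ((∑ r ∈ Finset.range i, x ℓ (r+1) ω) / i) := by
      intro i
      simp only [hT1_def]
      rw [Finset.sum_comm, Finset.sum_div]
      refine Finset.sum_congr rfl fun ℓ _ => ?_
      rw [← Finset.mul_sum, mul_div_assoc]
    refine Tendsto.congr (fun i => (hT1eq i).symm) ?_
    exact tendsto_finset_sum _ fun ℓ _ => (h1 ℓ).const_mul (v ℓ)
  have hVtdiv : Tendsto (fun i : ℕ => Vt i / i) atTop (𝓝 (∑ ℓ, am ℓ)) := by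
    have hVteq : ∀ i : ℕ, Vt i / i
        = ∑ ℓ, ((∑ r ∈ Finset.range i, |x ℓ (r+1) ω|) / i) := by
      intro i
      simp only [hVt_def, hw_def]
      rw [Finset.sum_comm, Finset.sum_div]
    refine Tendsto.congr (fun i => (hVteq i).symm) ?_
    exact tendsto_finset_sum _ fun ℓ _ => h2 ℓ
  have hWdiv := diff_div_tendsto_zero n hVtdiv
  have hS0div := tendsto_const_div_atTop_nhds_zero_nat (Sq 0 ω)
  have hbdiv : Tendsto (fun i : ℕ => b i / i) atTop (𝓝 (δ * (∑ ℓ, v ℓ * xm ℓ))) := by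
    have hsplit : ∀ i : ℕ, b i / i
        = δ * (Sq 0 ω / i) + δ * (T1 i / i) - (Vt (i+n) - Vt i) / i := by
      intro i
      simp only [hb_def]
      ring
    refine Tendsto.congr (fun i => (hsplit i).symm) ?_
    have := ((hS0div.const_mul δ).add (hT1div.const_mul δ)).sub hWdiv
    simpa using this
  have hb_atTop : Tendsto b atTop atTop :=
    tendsto_atTop_of_div_nat (mul_pos hδ0 hμbar) hbdiv
  have hm_atTop : Tendsto (fun i => mq i ω) atTop atTop :=
    tendsto_atTop_of_contract_rec hδ0 hδ1 hn1 (fun i => mq i ω) b hbrec hb_atTop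
  have hlam_atTop : Tendsto (fun i => lam k i ω) atTop atTop :=
    tendsto_atTop_mono (fun i => hmq_le i ω k) hm_atTop
  have hub : ∀ i, μb k i θTX ω ≤ Real.exp (-(lam k i ω)) := by
    intro i
    have hlog_le : lam k i ω ≤ -Real.log (μb k i θTX ω) := by
      have hterm : ∀ θ ∈ s, Real.log (μb k i θ ω / μb k i θTX ω)
          ≤ -Real.log (μb k i θTX ω) := by
        intro θ _
        have h4 : μb k i θ ω / μb k i θTX ω ≤ 1 / μb k i θTX ω :=
          (div_le_div_iff_of_pos_right (hμb_pos i k θTX ω)).2 (hμb_le1 i k θ ω)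
        calc Real.log (μb k i θ ω / μb k i θTX ω) ≤ Real.log (1 / μb k i θTX ω) :=
              Real.log_le_log (div_pos (hμb_pos i k θ ω) (hμb_pos i k θTX ω)) h4
          _ = -Real.log (μb k i θTX ω) := by rw [one_div, Real.log_inv]
      have h5 : ∑ θ ∈ s, Real.log (μb k i θ ω / μb k i θTX ω)
          ≤ (s.card : ℝ) * (-Real.log (μb k i θTX ω)) := by
        calc ∑ θ ∈ s, Real.log (μb k i θ ω / μb k i θTX ω)
            ≤ ∑ θ ∈ s, -Real.log (μb k i θTX ω) := Finset.sum_le_sum hterm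
          _ = (s.card : ℝ) * (-Real.log (μb k i θTX ω)) := by
              rw [Finset.sum_const, nsmul_eq_mul]
      have h6 : lam k i ω ≤ ((H:ℝ)-1)⁻¹ * ((s.card : ℝ) * (-Real.log (μb k i θTX ω))) := by
        simp only [hlam_def]
        exact mul_le_mul_of_nonneg_left h5 (inv_nonneg.2 hH1.le)
      rw [hcard, ← mul_assoc, inv_mul_cancel₀ hH1.ne', one_mul] at h6
      exact h6
    have h7 : Real.log (μb k i θTX ω) ≤ -(lam k i ω) := by linarith
    calc μb k i θTX ω = Real.exp (Real.log (μb k i θTX ω)) :=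
          (Real.exp_log (hμb_pos i k θTX ω)).symm
      _ ≤ Real.exp (-(lam k i ω)) := Real.exp_le_exp.2 h7
  have hexp0 : Tendsto (fun i => Real.exp (-(lam k i ω))) atTop (𝓝 0) :=
    Real.tendsto_exp_atBot.comp (tendsto_neg_atTop_atBot.comp hlam_atTop)
  exact squeeze_zero (fun i => (hμb_pos i k θTX ω).le) hub hexp0
end

section
/- Lemma 1 (Asymptotic rate of convergence without self-awareness). Suppose the agents run the partial-information algorithm without self-awareness with transmitted hypothesis θ_TX, under Assumptions 1 and 2. Then for every θ ∈ Θ∖{θ_TX} and every agent k, (1/i) log(μ_{k,i}(θ)/μ_{k,i}(θ_TX)) → d_ave(θ_TX) − d_ave(θ̄_TX) almost surely as i → ∞. -/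
open MeasureTheory ProbabilityTheory Filter Topology

lemma aux_cesaro_diff {u : ℕ → ℝ} {U : ℝ}
    (hU : Tendsto (fun n => (∑ j ∈ Finset.range n, u j)/(n:ℝ)) atTop (𝓝 U)) :
    Tendsto (fun n => u n / (n:ℝ)) atTop (𝓝 0) := by
  have hrat : Tendsto (fun n : ℕ => ((n:ℝ)+1)/n) atTop (𝓝 1) := by
    have h2 : Tendsto (fun n : ℕ => 1 + (n:ℝ)⁻¹) atTop (𝓝 (1 + 0)) :=
      tendsto_const_nhds.add (tendsto_natCast_atTop_atTop (R := ℝ)).inv_tendsto_atTop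
    simp only [add_zero] at h2
    refine h2.congr' ?_
    filter_upwards [eventually_ge_atTop 1] with n hn
    have : (n:ℝ) ≠ 0 := by positivity
    field_simp
  have hg : Tendsto (fun n : ℕ =>
      (∑ j ∈ Finset.range (n+1), u j)/((n:ℝ)+1) * (((n:ℝ)+1)/n)
        - (∑ j ∈ Finset.range n, u j)/(n:ℝ)) atTop (𝓝 (U * 1 - U)) := by
    refine Tendsto.sub (Tendsto.mul ?_ hrat) hU
    have := hU.comp (tendsto_add_atTop_nat 1)
    refine this.congr fun n => ?_
    simp [Function.comp]
  rw [show U * 1 - U = 0 by ring] at hg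
  refine hg.congr' ?_
  filter_upwards [eventually_ge_atTop 1] with n hn
  have hn0 : (n:ℝ) ≠ 0 := by
    have : (1:ℝ) ≤ n := by exact_mod_cast hn
    linarith
  have hn1 : (n:ℝ) + 1 ≠ 0 := by positivity
  rw [Finset.sum_range_succ]
  field_simp
  ring

lemma aux_weighted_cesaro {δ u : ℕ → ℝ} {C U : ℝ}
    (hδ0 : ∀ n, 0 ≤ δ n) (hδC : ∀ n, δ n ≤ C) (hδ : Tendsto δ atTop (𝓝 0))
    (hu0 : ∀ n, 0 ≤ u n)
    (hU : Tendsto (fun n => (∑ j ∈ Finset.range n, u (j+1))/(n:ℝ)) atTop (𝓝 U)) :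
    Tendsto (fun i => (∑ j ∈ Finset.Icc 2 i, δ (i+1-j) * u j)/(i:ℝ)) atTop (𝓝 0) := by
  have hU0 : 0 ≤ U := ge_of_tendsto' hU (fun n => div_nonneg (Finset.sum_nonneg fun j _ => hu0 _) (Nat.cast_nonneg n))
  have hC0 : 0 ≤ C := le_trans (hδ0 0) (hδC 0)
  rw [Metric.tendsto_atTop]
  intro ε hε
  -- choose M for δ
  set ε₁ : ℝ := ε/(3*(U+1)) with hε₁def
  have hε₁ : 0 < ε₁ := by positivity
  obtain ⟨M, hM⟩ : ∃ M : ℕ, ∀ m ≥ M, δ m ≤ ε₁ := by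
    have := (Metric.tendsto_atTop.1 hδ) ε₁ hε₁
    obtain ⟨M, hM⟩ := this
    exact ⟨M, fun m hm => by
      have := hM m hm
      rw [Real.dist_eq, sub_zero, abs_of_nonneg (hδ0 m)] at this
      linarith⟩
  set ε₂ : ℝ := ε/(3*(C+1)*(M+1)) with hε₂def
  have hε₂ : 0 < ε₂ := by positivity
  -- choose J for u j ≤ ε₂ j
  obtain ⟨J, hJ1, hJ⟩ : ∃ J : ℕ, 1 ≤ J ∧ ∀ j ≥ J, u j ≤ ε₂ * j := by
    have h0 : Tendsto (fun n => u (n+1) / (n:ℝ)) atTop (𝓝 0) := by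
      have := aux_cesaro_diff (u := fun j => u (j+1)) hU
      exact this
    obtain ⟨N, hN⟩ := (Metric.tendsto_atTop.1 h0) ε₂ hε₂
    refine ⟨N + 2, by omega, fun j hj => ?_⟩
    obtain ⟨n, rfl⟩ : ∃ n, j = n + 1 := ⟨j - 1, by omega⟩
    have hn : n ≥ N := by omega
    have hn1 : 1 ≤ n := by omega
    have h1 := hN n hn
    rw [Real.dist_eq, sub_zero, abs_of_nonneg (div_nonneg (hu0 _) (Nat.cast_nonneg _))] at h1
    have hnpos : (0:ℝ) < n := by exact_mod_cast hn1
    rw [div_lt_iff₀ hnpos] at h1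
    have h2 : u (n+1) ≤ ε₂ * n := le_of_lt h1
    have h3 : ε₂ * n ≤ ε₂ * (↑(n+1)) := by
      push_cast
      nlinarith [hε₂.le]
    linarith
  -- choose N₁ for partial sums
  obtain ⟨N₁, hN₁⟩ : ∃ N₁ : ℕ, ∀ n ≥ N₁, (∑ j ∈ Finset.range n, u (j+1)) ≤ (U+1) * n := by
    obtain ⟨N₁, hN₁⟩ := (Metric.tendsto_atTop.1 hU) 1 one_pos
    refine ⟨N₁ + 1, fun n hn => ?_⟩
    have h := hN₁ n (by omega)
    rw [Real.dist_eq] at h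
    have hnpos : (0:ℝ) < n := by
      have : 1 ≤ n := by omega
      exact_mod_cast this
    have h2 : (∑ j ∈ Finset.range n, u (j+1))/(n:ℝ) < U + 1 := by
      cases abs_lt.1 h with
      | intro h1 h2 => linarith
    calc (∑ j ∈ Finset.range n, u (j+1)) = (∑ j ∈ Finset.range n, u (j+1))/(n:ℝ) * n := by
            field_simp
      _ ≤ (U+1) * n := by nlinarith [h2]
  refine ⟨max N₁ (J + M + 2), fun i hi => ?_⟩
  have hiN₁ : i ≥ N₁ := le_trans (le_max_left _ _) hi
  have hiJM : i ≥ J + M + 2 := le_trans (le_max_right _ _) hi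
  have hipos : (0:ℝ) < i := by
    have : 1 ≤ i := by omega
    exact_mod_cast this
  have hT0 : 0 ≤ ∑ j ∈ Finset.Icc 2 i, δ (i+1-j) * u j :=
    Finset.sum_nonneg fun j _ => mul_nonneg (hδ0 _) (hu0 _)
  rw [Real.dist_eq, sub_zero, abs_of_nonneg (by positivity)]
  -- termwise bound
  have hterm : ∀ j ∈ Finset.Icc 2 i, δ (i+1-j) * u j ≤
      ε₁ * u j + (if i+1-M < j then (C+1) * (ε₂ * i) else 0) := by
    intro j hj
    simp only [Finset.mem_Icc] at hj
    by_cases hc : M ≤ i + 1 - j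
    · have h1 : δ (i+1-j) * u j ≤ ε₁ * u j :=
        mul_le_mul_of_nonneg_right (hM _ hc) (hu0 j)
      have h2 : (0:ℝ) ≤ if i+1-M < j then (C+1) * (ε₂ * i) else 0 := by
        split <;> positivity
      linarith
    · push_neg at hc
      have hjlarge : i + 1 - M < j := by omega
      rw [if_pos hjlarge]
      have hjJ : J ≤ j := by omega
      have huj : u j ≤ ε₂ * j := hJ j hjJ
      have hji : (j:ℝ) ≤ i := by exact_mod_cast hj.2
      have : δ (i+1-j) * u j ≤ C * (ε₂ * i) := by
        have h3 : u j ≤ ε₂ * i := le_trans huj (by nlinarith [hε₂.le])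
        exact mul_le_mul (hδC (i+1-j)) h3 (hu0 j) hC0
      nlinarith [hε₂.le, hipos.le, hu0 j, hε₁.le]
  have hsum := Finset.sum_le_sum hterm
  rw [Finset.sum_add_distrib] at hsum
  -- bound the first part
  have h1 : ∑ j ∈ Finset.Icc 2 i, ε₁ * u j ≤ ε₁ * ((U+1) * i) := by
    rw [← Finset.mul_sum]
    refine mul_le_mul_of_nonneg_left ?_ hε₁.le
    have hsub : ∑ j ∈ Finset.Icc 2 i, u j ≤ ∑ j ∈ Finset.Icc 1 i, u j :=
      Finset.sum_le_sum_of_subset_of_nonneg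
        (Finset.Icc_subset_Icc_left (by omega)) (fun j _ _ => hu0 j)
    have heq : ∑ j ∈ Finset.Icc 1 i, u j = ∑ j ∈ Finset.range i, u (j+1) := by
      rw [Finset.range_eq_Ico]
      rw [Finset.sum_Ico_eq_sum_range]
      simp only [Nat.sub_zero]
      rw [show Finset.Icc 1 i = Finset.Ico 1 (i+1) by rfl]
      rw [Finset.sum_Ico_eq_sum_range]
      simp [add_comm]
    rw [heq] at hsub
    exact le_trans hsub (hN₁ i hiN₁)
  -- bound the second part
  have h2 : ∑ j ∈ Finset.Icc 2 i, (if i+1-M < j then (C+1) * (ε₂ * i) else 0)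
      ≤ M * ((C+1) * (ε₂ * i)) := by
    rw [← Finset.sum_filter]
    rw [Finset.sum_const]
    have hcard : ((Finset.Icc 2 i).filter (fun j => i+1-M < j)).card ≤ M := by
      have hsubset : (Finset.Icc 2 i).filter (fun j => i+1-M < j) ⊆ Finset.Icc (i+2-M) i := by
        intro j hj
        simp only [Finset.mem_filter, Finset.mem_Icc] at hj ⊢
        omega
      have := Finset.card_le_card hsubset
      rw [Nat.card_Icc] at this
      omega
    have hpos : (0:ℝ) ≤ (C+1) * (ε₂ * i) := by positivity
    rw [nsmul_eq_mul]
    refine mul_le_mul_of_nonneg_right ?_ hpos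
    exact_mod_cast hcard
  have htotal : ∑ j ∈ Finset.Icc 2 i, δ (i+1-j) * u j
      ≤ ε₁ * ((U+1) * i) + M * ((C+1) * (ε₂ * i)) := by linarith
  rw [div_lt_iff₀ hipos]
  have hε₁calc : ε₁ * (U+1) = ε/3 := by
    rw [hε₁def]; field_simp
  have hε₂calc : M * ((C+1) * ε₂) ≤ ε/3 := by
    rw [hε₂def]
    rw [div_eq_mul_inv]
    have hMle : (M:ℝ) ≤ M + 1 := by linarith
    have : (M:ℝ) * ((C+1) * (ε * (3*(C+1)*(M+1))⁻¹)) = ε/3 * (M/(M+1)) := by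
      field_simp
    rw [this]
    have hfrac : (M:ℝ)/(M+1) ≤ 1 := by
      rw [div_le_one (by positivity)]
      linarith
    nlinarith [hε.le]
  calc ∑ j ∈ Finset.Icc 2 i, δ (i+1-j) * u j
      ≤ ε₁ * ((U+1) * i) + M * ((C+1) * (ε₂ * i)) := htotal
    _ = (ε₁ * (U+1) + M * ((C+1) * ε₂)) * i := by ring
    _ ≤ (ε/3 + ε/3) * i := by
        refine mul_le_mul_of_nonneg_right ?_ hipos.le
        rw [hε₁calc] at *
        linarith
    _ < ε * i := by nlinarith

lemma aux_markov {K : ℕ} (hK : 0 < K) (B : Matrix (Fin K) (Fin K) ℝ)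
    (hB0 : ∀ ℓ k, 0 ≤ B ℓ k) (hBs : ∀ k, ∑ ℓ, B ℓ k = 1)
    (hprim : ∃ n : ℕ, ∀ ℓ k, 0 < (B ^ n) ℓ k)
    (v : Fin K → ℝ) (hv0 : ∀ ℓ, 0 < v ℓ) (hvs : ∑ ℓ, v ℓ = 1)
    (heig : ∀ ℓ, ∑ k, B ℓ k * v k = v ℓ) (k : Fin K) :
    Tendsto (fun m => ∑ ℓ, |(B ^ m) ℓ k - v ℓ|) atTop (𝓝 0) := by
  have hKne : Nonempty (Fin K) := ⟨⟨0, hK⟩⟩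
  -- powers are nonneg and column-stochastic
  have hpow0 : ∀ m ℓ j, 0 ≤ (B ^ m) ℓ j := by
    intro m
    induction m with
    | zero => intro ℓ j; simp [Matrix.one_apply]; split <;> norm_num
    | succ m ih =>
      intro ℓ j
      rw [pow_succ, Matrix.mul_apply]
      exact Finset.sum_nonneg fun x _ => mul_nonneg (ih ℓ x) (hB0 x j)
  have hpows : ∀ m j, ∑ ℓ, (B ^ m) ℓ j = 1 := by
    intro m
    induction m with
    | zero => intro j; simp [Matrix.one_apply]
    | succ m ih =>
      intro j
      simp only [pow_succ, Matrix.mul_apply]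
      rw [Finset.sum_comm]
      have h1 : ∀ x, ∑ ℓ, (B ^ m) ℓ x * B x j = B x j := by
        intro x
        rw [← Finset.sum_mul, ih x, one_mul]
      rw [Finset.sum_congr rfl fun x _ => h1 x]
      exact hBs j
  have hpeig : ∀ m ℓ, ∑ j, (B ^ m) ℓ j * v j = v ℓ := by
    intro m
    induction m with
    | zero => intro ℓ; simp [Matrix.one_apply]
    | succ m ih =>
      intro ℓ
      have h1 : ∀ j, ((B ^ m * B) ℓ j) * v j = ∑ x, (B ^ m) ℓ x * (B x j * v j) := by
        intro j
        rw [Matrix.mul_apply, Finset.sum_mul]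
        exact Finset.sum_congr rfl fun x _ => by ring
      rw [pow_succ, Finset.sum_congr rfl fun j _ => h1 j, Finset.sum_comm]
      have h2 : ∀ x, ∑ j, (B ^ m) ℓ x * (B x j * v j) = (B ^ m) ℓ x * v x := by
        intro x
        rw [← Finset.mul_sum, heig x]
      rw [Finset.sum_congr rfl fun x _ => h2 x]
      exact ih ℓ
  -- a power with all entries positive, exponent ≥ 1
  obtain ⟨n, hn⟩ := hprim
  set N := n + 1 with hNdef
  have hNpos : ∀ ℓ j, 0 < (B ^ N) ℓ j := by
    intro ℓ j
    rw [hNdef, pow_succ, Matrix.mul_apply]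
    have hex : ∃ x, 0 < B x j := by
      by_contra h
      push_neg at h
      have : ∑ x, B x j ≤ 0 := Finset.sum_nonpos fun x _ => h x
      rw [hBs j] at this
      linarith
    obtain ⟨x, hx⟩ := hex
    exact Finset.sum_pos' (fun y _ => mul_nonneg (hpow0 n ℓ y) (hB0 y j))
      ⟨x, Finset.mem_univ x, mul_pos (hn ℓ x) hx⟩
  -- minimal entry ε
  obtain ⟨p, -, hp⟩ := Finset.exists_min_image (Finset.univ : Finset (Fin K × Fin K))
    (fun p => (B ^ N) p.1 p.2) Finset.univ_nonempty
  set ε : ℝ := (B ^ N) p.1 p.2 with hεdef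
  have hε : 0 < ε := hNpos p.1 p.2
  have hεle : ∀ ℓ j, ε ≤ (B ^ N) ℓ j := fun ℓ j => hp (ℓ, j) (Finset.mem_univ _)
  set ρ : ℝ := 1 - K * ε with hρdef
  have hρ1 : ρ < 1 := by
    have : (0:ℝ) < K * ε := by positivity
    rw [hρdef]; linarith
  have hρ0 : 0 ≤ ρ := by
    have h1 : (K:ℝ) * ε = ∑ _ℓ : Fin K, ε := by
      rw [Finset.sum_const, Finset.card_univ, Fintype.card_fin, nsmul_eq_mul]
    have h2 : ∑ _ℓ : Fin K, ε ≤ ∑ ℓ, (B ^ N) ℓ k :=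
      Finset.sum_le_sum fun ℓ _ => hεle ℓ k
    rw [hpows N k] at h2
    rw [hρdef]
    linarith [h1 ▸ h2]
  -- contraction on mean-zero vectors
  have hcontr : ∀ z : Fin K → ℝ, (∑ j, z j) = 0 →
      ∑ ℓ, |∑ j, (B ^ N) ℓ j * z j| ≤ ρ * ∑ j, |z j| := by
    intro z hz
    have h1 : ∀ ℓ, ∑ j, (B ^ N) ℓ j * z j = ∑ j, ((B ^ N) ℓ j - ε) * z j := by
      intro ℓ
      simp only [sub_mul, Finset.sum_sub_distrib]
      rw [← Finset.mul_sum, hz, mul_zero, sub_zero]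
    calc ∑ ℓ, |∑ j, (B ^ N) ℓ j * z j| = ∑ ℓ, |∑ j, ((B ^ N) ℓ j - ε) * z j| := by
          exact Finset.sum_congr rfl fun ℓ _ => by rw [h1 ℓ]
      _ ≤ ∑ ℓ, ∑ j, ((B ^ N) ℓ j - ε) * |z j| := by
          refine Finset.sum_le_sum fun ℓ _ => ?_
          refine (Finset.abs_sum_le_sum_abs _ _).trans (Finset.sum_le_sum fun j _ => ?_)
          rw [abs_mul, abs_of_nonneg (sub_nonneg.2 (hεle ℓ j))]
      _ = ∑ j, (∑ ℓ, ((B ^ N) ℓ j - ε)) * |z j| := by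
          rw [Finset.sum_comm]
          exact Finset.sum_congr rfl fun j _ => (Finset.sum_mul _ _ _).symm
      _ = ∑ j, ρ * |z j| := by
          refine Finset.sum_congr rfl fun j _ => ?_
          congr 1
          rw [Finset.sum_sub_distrib, hpows N j, Finset.sum_const, Finset.card_univ,
            Fintype.card_fin, nsmul_eq_mul, hρdef]
      _ = ρ * ∑ j, |z j| := (Finset.mul_sum _ _ _).symm
  set F : ℕ → ℝ := fun m => ∑ ℓ, |(B ^ m) ℓ k - v ℓ| with hFdef
  have hzsum : ∀ m, ∑ ℓ, ((B ^ m) ℓ k - v ℓ) = 0 := by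
    intro m
    rw [Finset.sum_sub_distrib, hpows m k, hvs, sub_self]
  have hstep : ∀ m, F (N + m) ≤ ρ * F m := by
    intro m
    have h1 : ∀ ℓ, (B ^ (N + m)) ℓ k - v ℓ = ∑ j, (B ^ N) ℓ j * ((B ^ m) j k - v j) := by
      intro ℓ
      have h2 : (B ^ (N + m)) ℓ k = ∑ j, (B ^ N) ℓ j * (B ^ m) j k := by
        rw [pow_add, Matrix.mul_apply]
      simp only [mul_sub, Finset.sum_sub_distrib]
      rw [← h2, hpeig N ℓ]
    have := hcontr (fun ℓ => (B ^ m) ℓ k - v ℓ) (hzsum m)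
    calc F (N + m) = ∑ ℓ, |∑ j, (B ^ N) ℓ j * ((B ^ m) j k - v j)| :=
          Finset.sum_congr rfl fun ℓ _ => by rw [h1 ℓ]
      _ ≤ ρ * F m := this
  have hF2 : ∀ m, F m ≤ 2 := by
    intro m
    calc F m ≤ ∑ ℓ, ((B ^ m) ℓ k + v ℓ) := by
          refine Finset.sum_le_sum fun ℓ _ => ?_
          calc |(B ^ m) ℓ k - v ℓ| ≤ |(B ^ m) ℓ k| + |v ℓ| := abs_sub _ _
            _ = (B ^ m) ℓ k + v ℓ := by
                rw [abs_of_nonneg (hpow0 m ℓ k), abs_of_nonneg (hv0 ℓ).le]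
      _ = 2 := by
          rw [Finset.sum_add_distrib, hpows m k, hvs]; norm_num
  have hgeo : ∀ q r, F (N * q + r) ≤ 2 * ρ ^ q := by
    intro q
    induction q with
    | zero => intro r; simpa using hF2 r
    | succ q ih =>
      intro r
      have h1 : N * (q + 1) + r = N + (N * q + r) := by ring
      rw [h1]
      calc F (N + (N * q + r)) ≤ ρ * F (N * q + r) := hstep _
        _ ≤ ρ * (2 * ρ ^ q) := mul_le_mul_of_nonneg_left (ih r) hρ0
        _ = 2 * ρ ^ (q + 1) := by ring
  have hbound : ∀ m, F m ≤ 2 * ρ ^ (m / N) := by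
    intro m
    have := hgeo (m / N) (m % N)
    rwa [Nat.div_add_mod] at this
  have hdiv : Tendsto (fun m => m / N) atTop atTop := by
    refine tendsto_atTop_atTop.2 fun b => ⟨N * b, fun m hm => ?_⟩
    exact (Nat.le_div_iff_mul_le (by omega)).2 ((mul_comm b N).le.trans hm)
  have htend : Tendsto (fun m => 2 * ρ ^ (m / N)) atTop (𝓝 0) := by
    have h1 := (tendsto_pow_atTop_nhds_zero_of_lt_one hρ0 hρ1).comp hdiv
    have h2 := h1.const_mul (2:ℝ)
    simpa using h2
  exact squeeze_zero (fun m => Finset.sum_nonneg fun ℓ _ => abs_nonneg _) hbound htend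

lemma aux_logbar_bound {H : ℕ} (hH : 2 ≤ H) (θTX θ0 : Fin H) {α : Type}
    (L : Fin H → α → ℝ) (hLpos : ∀ τ x, 0 < L τ x) (x : α) :
    |Real.log (L θ0 x / ((∑ τ ∈ Finset.univ.erase θTX, L τ x) / ((H:ℝ) - 1)))| ≤
      ∑ τ ∈ Finset.univ.erase θTX, |Real.log (L θ0 x / L τ x)| := by
  have hH1 : (0:ℝ) < (H:ℝ) - 1 := by
    have : (2:ℝ) ≤ H := by exact_mod_cast hH
    linarith
  have hcard : (Finset.univ.erase θTX).card = H - 1 := by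
    rw [Finset.card_erase_of_mem (Finset.mem_univ _), Finset.card_univ, Fintype.card_fin]
  have hne : (Finset.univ.erase θTX).Nonempty := by
    rw [← Finset.card_pos, hcard]; omega
  set S := ∑ τ ∈ Finset.univ.erase θTX, L τ x with hSdef
  set Lb := S / ((H:ℝ) - 1) with hLbdef
  obtain ⟨τ₁, hτ₁mem, hτ₁⟩ := Finset.exists_min_image _ (fun τ => L τ x) hne
  obtain ⟨τ₂, hτ₂mem, hτ₂⟩ := Finset.exists_max_image _ (fun τ => L τ x) hne
  have hcardR : ((Finset.univ.erase θTX).card : ℝ) = (H:ℝ) - 1 := by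
    rw [hcard]; push_cast [Nat.cast_sub (by omega : 1 ≤ H)]; ring
  have hlow : L τ₁ x ≤ Lb := by
    have h1 : (Finset.univ.erase θTX).card • L τ₁ x ≤ S :=
      Finset.card_nsmul_le_sum _ _ _ (fun τ hτ => hτ₁ τ hτ)
    rw [nsmul_eq_mul, hcardR] at h1
    rw [hLbdef, le_div_iff₀ hH1]
    linarith
  have hup : Lb ≤ L τ₂ x := by
    have h1 : S ≤ (Finset.univ.erase θTX).card • L τ₂ x :=
      Finset.sum_le_card_nsmul _ _ _ (fun τ hτ => hτ₂ τ hτ)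
    rw [nsmul_eq_mul, hcardR] at h1
    rw [hLbdef, div_le_iff₀ hH1]
    linarith
  have hLb_pos : 0 < Lb := lt_of_lt_of_le (hLpos τ₁ x) hlow
  have hlog : ∀ τ : Fin H, ∀ y : ℝ, 0 < y →
      Real.log (L θ0 x / y) = Real.log (L θ0 x) - Real.log y := by
    intro τ y hy
    exact Real.log_div (hLpos θ0 x).ne' hy.ne'
  refine abs_le.2 ⟨?_, ?_⟩
  · -- lower bound
    have h1 : Real.log (L θ0 x / L τ₂ x) ≤ Real.log (L θ0 x / Lb) := by
      rw [hlog τ₂ _ (hLpos τ₂ x), hlog τ₂ _ hLb_pos]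
      have := Real.log_le_log hLb_pos hup
      linarith
    have h2 : -|Real.log (L θ0 x / L τ₂ x)| ≤ Real.log (L θ0 x / L τ₂ x) :=
      neg_abs_le _
    have h3 : |Real.log (L θ0 x / L τ₂ x)| ≤
        ∑ τ ∈ Finset.univ.erase θTX, |Real.log (L θ0 x / L τ x)| :=
      Finset.single_le_sum (f := fun τ => |Real.log (L θ0 x / L τ x)|) (fun τ _ => abs_nonneg _) hτ₂mem
    linarith
  · -- upper bound
    have h1 : Real.log (L θ0 x / Lb) ≤ Real.log (L θ0 x / L τ₁ x) := by
      rw [hlog τ₁ _ (hLpos τ₁ x), hlog τ₁ _ hLb_pos]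
      have := Real.log_le_log (hLpos τ₁ x) hlow
      linarith
    have h2 : Real.log (L θ0 x / L τ₁ x) ≤ |Real.log (L θ0 x / L τ₁ x)| := le_abs_self _
    have h3 : |Real.log (L θ0 x / L τ₁ x)| ≤
        ∑ τ ∈ Finset.univ.erase θTX, |Real.log (L θ0 x / L τ x)| :=
      Finset.single_le_sum (f := fun τ => |Real.log (L θ0 x / L τ x)|) (fun τ _ => abs_nonneg _) hτ₁mem
    linarith

theorem asymptotic_rate_of_convergence_without_self_awareness
    {Ω : Type} [mΩ : MeasurableSpace Ω] (P : Measure Ω) [IsProbabilityMeasure P]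
    (K H : ℕ) (hK : 0 < K) (hH : 2 ≤ H)
    (X : Fin K → Type) [∀ k, MeasurableSpace (X k)]
    (ν : ∀ k, Measure (X k))
    (L : ∀ k : Fin K, Fin H → X k → ℝ)
    (θ0 : Fin H)
    (hLpos : ∀ k θ x, 0 < L k θ x)
    (hLmeas : ∀ k θ, Measurable (L k θ))
    (hLdens : ∀ k θ, ∫ x, L k θ x ∂(ν k) = 1)
    (ξ : ∀ k : Fin K, ℕ → Ω → X k)
    (hξmeas : ∀ k i, Measurable (ξ k i))
    (hξdist : ∀ k (i : ℕ), 1 ≤ i →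
      Measure.map (ξ k i) P = (ν k).withDensity (fun x => ENNReal.ofReal (L k θ0 x)))
    (hξindep : iIndepFun
      (fun (i : ℕ) (ω : Ω) (k : Fin K) => ξ k (i + 1) ω) P)
    (hKL : ∀ k θ θ',
      Integrable (fun x => L k θ x * Real.log (L k θ x / L k θ' x)) (ν k))
    (a : Fin K → Fin K → ℝ)
    (ha_nonneg : ∀ ℓ k, 0 ≤ a ℓ k)
    (ha_stoch : ∀ k, ∑ ℓ, a ℓ k = 1)
    (ha_prim : ∃ n : ℕ, ∀ ℓ k, 0 < ((Matrix.of a) ^ n) ℓ k)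
    (v : Fin K → ℝ)
    (hv_pos : ∀ ℓ, 0 < v ℓ)
    (hv_sum : ∑ ℓ, v ℓ = 1)
    (hv_eig : ∀ ℓ, ∑ k, a ℓ k * v k = v ℓ)
    (θTX : Fin H)
    (μb ψ ψh : Fin K → ℕ → Fin H → Ω → ℝ)
    (μinit : Fin K → Fin H → ℝ)
    (hμinit_pos : ∀ k θ, 0 < μinit k θ)
    (hμinit_sum : ∀ k, ∑ θ, μinit k θ = 1)
    (hμb0 : ∀ k θ ω, μb k 0 θ ω = μinit k θ)
    (hψ : ∀ k (i : ℕ) θ ω, ψ k (i + 1) θ ω =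
      μb k i θ ω * L k θ (ξ k (i + 1) ω) /
        ∑ θ', μb k i θ' ω * L k θ' (ξ k (i + 1) ω))
    (hψh_tx : ∀ k (i : ℕ) ω, ψh k (i + 1) θTX ω = ψ k (i + 1) θTX ω)
    (hψh_ntx : ∀ k (i : ℕ) θ ω, θ ≠ θTX →
      ψh k (i + 1) θ ω = (1 - ψ k (i + 1) θTX ω) / ((H : ℝ) - 1))
    (hcomb : ∀ k (i : ℕ) θ ω, μb k (i + 1) θ ω =
      Real.exp (∑ ℓ, a ℓ k * Real.log (ψh ℓ (i + 1) θ ω)) /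
        ∑ θ', Real.exp (∑ ℓ, a ℓ k * Real.log (ψh ℓ (i + 1) θ' ω)))
    :
    ∀ (θ : Fin H), θ ≠ θTX → ∀ k : Fin K, ∀ᵐ ω ∂P,
      Tendsto (fun (i : ℕ) => (1 / (i : ℝ)) * Real.log (μb k i θ ω / μb k i θTX ω))
        atTop (𝓝 ((∑ m, v m * (∫ ω, Real.log (L m θ0 (ξ m 1 ω) / L m θTX (ξ m 1 ω)) ∂P)) - (∑ m, v m * (∫ ω, Real.log (L m θ0 (ξ m 1 ω) / ((∑ τ ∈ Finset.univ.erase θTX, L m τ (ξ m 1 ω)) / ((H : ℝ) - 1))) ∂P)))) := by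
  intro θ hθ k
  classical
  have hH1 : (0:ℝ) < (H:ℝ) - 1 := by
    have : (2:ℝ) ≤ H := by exact_mod_cast hH
    linarith
  have hFinHne : Nonempty (Fin H) := ⟨θTX⟩
  have hFinKne : Nonempty (Fin K) := ⟨k⟩
  have herase : θ ∈ Finset.univ.erase θTX := Finset.mem_erase.2 ⟨hθ, Finset.mem_univ θ⟩
  have herasene : (Finset.univ.erase θTX).Nonempty := ⟨θ, herase⟩
  have hLbne : ∀ m (x : X m), 0 < (∑ τ ∈ Finset.univ.erase θTX, L m τ x) / ((H:ℝ)-1) :=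
    fun m x => div_pos (Finset.sum_pos (fun τ _ => hLpos m τ x) herasene) hH1
  set F : ∀ m : Fin K, X m → ℝ :=
    fun m x => Real.log ((∑ τ ∈ Finset.univ.erase θTX, L m τ x) / ((H:ℝ)-1) / L m θTX x)
    with hFdef
  set Y : Fin K → ℕ → Ω → ℝ := fun m j ω => F m (ξ m (j+1) ω) with hYdef
  -- ===== deterministic belief facts =====
  have hμpos : ∀ m i θ' ω, 0 < μb m i θ' ω := by
    intro m i
    induction i with
    | zero => intro θ' ω; rw [hμb0]; exact hμinit_pos m θ'
    | succ i ih =>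
      intro θ' ω
      rw [hcomb]
      exact div_pos (Real.exp_pos _)
        (Finset.sum_pos (fun τ _ => Real.exp_pos _) Finset.univ_nonempty)
  have hD_pos : ∀ m i ω, 0 < ∑ θ', μb m i θ' ω * L m θ' (ξ m (i+1) ω) :=
    fun m i ω => Finset.sum_pos
      (fun τ _ => mul_pos (hμpos m i τ ω) (hLpos m τ _)) Finset.univ_nonempty
  have hψ_pos : ∀ m i ω, 0 < ψ m (i+1) θTX ω := by
    intro m i ω
    rw [hψ]
    exact div_pos (mul_pos (hμpos _ _ _ _) (hLpos _ _ _)) (hD_pos m i ω)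
  have hψ_lt1 : ∀ m i ω, ψ m (i+1) θTX ω < 1 := by
    intro m i ω
    rw [hψ, div_lt_one (hD_pos m i ω)]
    have h2 : 0 < ∑ τ ∈ Finset.univ.erase θTX, μb m i τ ω * L m τ (ξ m (i+1) ω) :=
      Finset.sum_pos (fun τ _ => mul_pos (hμpos _ _ _ _) (hLpos _ _ _)) herasene
    have h3 := Finset.add_sum_erase Finset.univ
      (fun τ => μb m i τ ω * L m τ (ξ m (i+1) ω)) (Finset.mem_univ θTX)
    linarith
  have hψh_pos : ∀ m i θ' ω, 0 < ψh m (i+1) θ' ω := by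
    intro m i θ' ω
    by_cases hc : θ' = θTX
    · subst hc; rw [hψh_tx]; exact hψ_pos m i ω
    · rw [hψh_ntx m i θ' ω hc]
      exact div_pos (by linarith [hψ_lt1 m i ω]) hH1
  have hμeq : ∀ m i τ ω, τ ≠ θTX → μb m (i+1) τ ω = μb m (i+1) θ ω := by
    intro m i τ ω hτ
    have h1 : ∀ ℓ, ψh ℓ (i+1) τ ω = ψh ℓ (i+1) θ ω := fun ℓ => by
      rw [hψh_ntx _ _ _ _ hτ, hψh_ntx _ _ _ _ hθ]
    have h2 : (∑ ℓ, a ℓ m * Real.log (ψh ℓ (i+1) τ ω))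
        = ∑ ℓ, a ℓ m * Real.log (ψh ℓ (i+1) θ ω) :=
      Finset.sum_congr rfl fun ℓ _ => by rw [h1 ℓ]
    rw [hcomb, hcomb, h2]
  set β : Fin K → ℕ → Ω → ℝ := fun m i ω => Real.log (μb m i θ ω / μb m i θTX ω) with hβdef
  have hstep : ∀ ℓ (i : ℕ) ω, 1 ≤ i →
      Real.log (ψh ℓ (i+1) θ ω) - Real.log (ψh ℓ (i+1) θTX ω) = β ℓ i ω + Y ℓ i ω := by
    intro ℓ i ω hi
    obtain ⟨i', rfl⟩ : ∃ i', i = i' + 1 := ⟨i - 1, by omega⟩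
    have hDpos : 0 < ∑ θ', μb ℓ (i'+1) θ' ω * L ℓ θ' (ξ ℓ (i'+1+1) ω) := hD_pos ℓ (i'+1) ω
    set D := ∑ θ', μb ℓ (i'+1) θ' ω * L ℓ θ' (ξ ℓ (i'+1+1) ω) with hDdef
    have hSpos : 0 < ∑ τ ∈ Finset.univ.erase θTX, L ℓ τ (ξ ℓ (i'+1+1) ω) :=
      Finset.sum_pos (fun τ _ => hLpos _ _ _) herasene
    have e2 : ψh ℓ (i'+1+1) θTX ω
        = μb ℓ (i'+1) θTX ω * L ℓ θTX (ξ ℓ (i'+1+1) ω) / D := by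
      rw [hψh_tx, hψ]
    have e1 : ψh ℓ (i'+1+1) θ ω = μb ℓ (i'+1) θ ω *
        ((∑ τ ∈ Finset.univ.erase θTX, L ℓ τ (ξ ℓ (i'+1+1) ω)) / ((H:ℝ)-1)) / D := by
      rw [hψh_ntx _ _ _ _ hθ, hψ]
      have h3 : 1 - μb ℓ (i'+1) θTX ω * L ℓ θTX (ξ ℓ (i'+1+1) ω) / D
          = (∑ τ ∈ Finset.univ.erase θTX, μb ℓ (i'+1) τ ω * L ℓ τ (ξ ℓ (i'+1+1) ω)) / D := by
        rw [eq_div_iff hDpos.ne', sub_mul, one_mul, div_mul_cancel₀ _ hDpos.ne']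
        have h4 := Finset.add_sum_erase Finset.univ
          (fun τ => μb ℓ (i'+1) τ ω * L ℓ τ (ξ ℓ (i'+1+1) ω)) (Finset.mem_univ θTX)
        rw [hDdef]
        linarith
      rw [h3]
      have h5 : ∑ τ ∈ Finset.univ.erase θTX, μb ℓ (i'+1) τ ω * L ℓ τ (ξ ℓ (i'+1+1) ω)
          = μb ℓ (i'+1) θ ω * ∑ τ ∈ Finset.univ.erase θTX, L ℓ τ (ξ ℓ (i'+1+1) ω) := by
        rw [Finset.mul_sum]
        exact Finset.sum_congr rfl fun τ hτ => by
          rw [hμeq ℓ i' τ ω (Finset.ne_of_mem_erase hτ)]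
      rw [h5]
      ring
    rw [e1, e2]
    rw [Real.log_div (mul_pos (hμpos ℓ (i'+1) θ ω) (hLbne ℓ _)).ne' hDpos.ne',
      Real.log_div (mul_pos (hμpos ℓ (i'+1) θTX ω) (hLpos ℓ θTX _)).ne' hDpos.ne',
      Real.log_mul (hμpos ℓ (i'+1) θ ω).ne' (hLbne ℓ _).ne',
      Real.log_mul (hμpos ℓ (i'+1) θTX ω).ne' (hLpos ℓ θTX _).ne']
    simp only [hβdef, hYdef, hFdef]
    rw [Real.log_div (hμpos ℓ (i'+1) θ ω).ne' (hμpos ℓ (i'+1) θTX ω).ne',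
      Real.log_div (hLbne ℓ _).ne' (hLpos ℓ θTX _).ne']
    ring
  have hrec : ∀ m (i : ℕ) ω, 1 ≤ i →
      β m (i+1) ω = ∑ ℓ, a ℓ m * (β ℓ i ω + Y ℓ i ω) := by
    intro m i ω hi
    have h1 : β m (i+1) ω = (∑ ℓ, a ℓ m * Real.log (ψh ℓ (i+1) θ ω))
        - (∑ ℓ, a ℓ m * Real.log (ψh ℓ (i+1) θTX ω)) := by
      simp only [hβdef]
      rw [hcomb m i θ ω, hcomb m i θTX ω]
      have hT : (0:ℝ) < ∑ θ', Real.exp (∑ ℓ, a ℓ m * Real.log (ψh ℓ (i+1) θ' ω)) :=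
        Finset.sum_pos (fun τ _ => Real.exp_pos _) Finset.univ_nonempty
      rw [div_div_div_cancel_right₀]
      · rw [Real.log_div (Real.exp_ne_zero _) (Real.exp_ne_zero _), Real.log_exp, Real.log_exp]
      · exact hT.ne'
    rw [h1, ← Finset.sum_sub_distrib]
    refine Finset.sum_congr rfl fun ℓ _ => ?_
    rw [← mul_sub, hstep ℓ i ω hi]
  set B : Matrix (Fin K) (Fin K) ℝ := Matrix.of a with hBdef
  have hmul : ∀ (p : ℕ) (m n : Fin K), ∑ ℓ, (B ^ p) n ℓ * a ℓ m = (B ^ (p+1)) n m := by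
    intro p m n
    rw [pow_succ, Matrix.mul_apply]
    rfl
  have hclosed : ∀ (i : ℕ) ω, 1 ≤ i → ∀ m, β m i ω =
      (∑ ℓ, (B ^ (i-1)) ℓ m * β ℓ 1 ω)
        + ∑ j ∈ Finset.Icc 2 i, ∑ ℓ, (B ^ (i+1-j)) ℓ m * Y ℓ (j-1) ω := by
    intro i
    induction i with
    | zero => intro ω h; omega
    | succ i ih =>
      intro ω h m
      by_cases hi : 1 ≤ i
      · -- inductive step
        have hIcc := Finset.sum_Icc_succ_top (by omega : 2 ≤ i + 1)
          (fun j => ∑ ℓ, (B ^ (i+1+1-j)) ℓ m * Y ℓ (j-1) ω)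
        calc β m (i+1) ω = ∑ ℓ, a ℓ m * (β ℓ i ω + Y ℓ i ω) := hrec m i ω hi
          _ = (∑ ℓ, a ℓ m * β ℓ i ω) + ∑ ℓ, a ℓ m * Y ℓ i ω := by
              rw [← Finset.sum_add_distrib]
              exact Finset.sum_congr rfl fun ℓ _ => by ring
          _ = ((∑ ℓ, a ℓ m * (∑ n, (B ^ (i-1)) n ℓ * β n 1 ω))
                + ∑ ℓ, a ℓ m * (∑ j ∈ Finset.Icc 2 i, ∑ n, (B ^ (i+1-j)) n ℓ * Y n (j-1) ω))
                + ∑ ℓ, a ℓ m * Y ℓ i ω := by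
              congr 1
              rw [← Finset.sum_add_distrib]
              exact Finset.sum_congr rfl fun ℓ _ => by rw [ih ω hi ℓ, mul_add]
          _ = ((∑ n, (B ^ (i+1-1)) n m * β n 1 ω)
                + ∑ j ∈ Finset.Icc 2 i, ∑ n, (B ^ (i+1+1-j)) n m * Y n (j-1) ω)
                + ∑ n, (B ^ (i+1+1-(i+1))) n m * Y n ((i+1)-1) ω := by
              congr 1
              congr 1
              · -- first term
                have e1 : ∀ ℓ, a ℓ m * (∑ n, (B ^ (i-1)) n ℓ * β n 1 ω)
                    = ∑ n, a ℓ m * ((B ^ (i-1)) n ℓ * β n 1 ω) := fun ℓ => Finset.mul_sum _ _ _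
                rw [Finset.sum_congr rfl fun ℓ _ => e1 ℓ, Finset.sum_comm]
                refine Finset.sum_congr rfl fun n _ => ?_
                have e2 : ∑ ℓ, a ℓ m * ((B ^ (i-1)) n ℓ * β n 1 ω)
                    = (∑ ℓ, (B ^ (i-1)) n ℓ * a ℓ m) * β n 1 ω := by
                  rw [Finset.sum_mul]
                  exact Finset.sum_congr rfl fun ℓ _ => by ring
                rw [e2, hmul (i-1) m n]
                have : i - 1 + 1 = i + 1 - 1 := by omega
                rw [this]
              · -- middle term
                have e1 : ∀ ℓ, a ℓ m * (∑ j ∈ Finset.Icc 2 i, ∑ n, (B ^ (i+1-j)) n ℓ * Y n (j-1) ω)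
                    = ∑ j ∈ Finset.Icc 2 i, a ℓ m * ∑ n, (B ^ (i+1-j)) n ℓ * Y n (j-1) ω :=
                  fun ℓ => Finset.mul_sum _ _ _
                rw [Finset.sum_congr rfl fun ℓ _ => e1 ℓ, Finset.sum_comm]
                refine Finset.sum_congr rfl fun j hj => ?_
                have hj2 : j ≤ i := (Finset.mem_Icc.1 hj).2
                have e2 : ∀ ℓ, a ℓ m * (∑ n, (B ^ (i+1-j)) n ℓ * Y n (j-1) ω)
                    = ∑ n, a ℓ m * ((B ^ (i+1-j)) n ℓ * Y n (j-1) ω) := fun ℓ => Finset.mul_sum _ _ _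
                rw [Finset.sum_congr rfl fun ℓ _ => e2 ℓ, Finset.sum_comm]
                refine Finset.sum_congr rfl fun n _ => ?_
                have e3 : ∑ ℓ, a ℓ m * ((B ^ (i+1-j)) n ℓ * Y n (j-1) ω)
                    = (∑ ℓ, (B ^ (i+1-j)) n ℓ * a ℓ m) * Y n (j-1) ω := by
                  rw [Finset.sum_mul]
                  exact Finset.sum_congr rfl fun ℓ _ => by ring
                rw [e3, hmul (i+1-j) m n]
                have : i + 1 - j + 1 = i + 1 + 1 - j := by omega
                rw [this]
              · -- last term
                refine Finset.sum_congr rfl fun n _ => ?_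
                have : i + 1 + 1 - (i + 1) = 1 := by omega
                rw [this, pow_one]
                have : (i+1) - 1 = i := by omega
                rw [this]
                rfl
          _ = (∑ ℓ, (B ^ (i+1-1)) ℓ m * β ℓ 1 ω)
                + ∑ j ∈ Finset.Icc 2 (i+1), ∑ ℓ, (B ^ (i+1+1-j)) ℓ m * Y ℓ (j-1) ω := by
              rw [hIcc]
              ring
      · -- base case i = 0
        have hi0 : i = 0 := by omega
        subst hi0
        have hempty : Finset.Icc 2 1 = (∅ : Finset ℕ) := by decide
        simp only [hempty, Finset.sum_empty, add_zero, pow_zero, Nat.sub_self]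
        have : ∀ ℓ : Fin K, (1 : Matrix (Fin K) (Fin K) ℝ) ℓ m * β ℓ 1 ω
            = (if ℓ = m then β ℓ 1 ω else 0) := by
          intro ℓ
          rw [Matrix.one_apply]
          split <;> simp
        rw [Finset.sum_congr rfl fun ℓ _ => this ℓ, Finset.sum_ite_eq' Finset.univ m
          (fun ℓ => β ℓ 1 ω)]
        simp

  -- ===== measurability and integrability =====
  have hLbar_meas : ∀ m, Measurable
      (fun x : X m => (∑ τ ∈ Finset.univ.erase θTX, L m τ x) / ((H:ℝ)-1)) :=
    fun m => (Finset.measurable_sum _ (fun τ _ => hLmeas m τ)).div_const _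
  have hF_meas : ∀ m, Measurable (F m) := by
    intro m
    simp only [hFdef]
    exact Real.measurable_log.comp ((hLbar_meas m).div (hLmeas m θTX))
  have hmapint : ∀ m (g : X m → ℝ), Measurable g →
      Integrable (fun x => g x * L m θ0 x) (ν m) →
      Integrable (fun ω => g (ξ m 1 ω)) P := by
    intro m g hg hint
    have h1 : Integrable g (Measure.map (ξ m 1) P) := by
      rw [hξdist m 1 le_rfl]
      rw [integrable_withDensity_iff (hLmeas m θ0).ennreal_ofReal
        (Eventually.of_forall fun x => ENNReal.ofReal_lt_top)]
      refine hint.congr (Eventually.of_forall fun x => ?_)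
      show g x * L m θ0 x = g x * (ENNReal.ofReal (L m θ0 x)).toReal
      rw [ENNReal.toReal_ofReal (hLpos m θ0 x).le]
    exact (integrable_map_measure hg.aestronglyMeasurable (hξmeas m 1).aemeasurable).1 h1
  have hint1 : ∀ m τ, Integrable
      (fun ω => Real.log (L m θ0 (ξ m 1 ω) / L m τ (ξ m 1 ω))) P := by
    intro m τ
    refine hmapint m (fun x => Real.log (L m θ0 x / L m τ x))
      (Real.measurable_log.comp ((hLmeas m θ0).div (hLmeas m τ))) ?_
    refine (hKL m θ0 τ).congr (Eventually.of_forall fun x => ?_)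
    show L m θ0 x * Real.log (L m θ0 x / L m τ x) = Real.log (L m θ0 x / L m τ x) * L m θ0 x
    ring
  have hint2 : ∀ m, Integrable (fun ω => Real.log (L m θ0 (ξ m 1 ω) /
      ((∑ τ ∈ Finset.univ.erase θTX, L m τ (ξ m 1 ω)) / ((H:ℝ)-1)))) P := by
    intro m
    refine hmapint m (fun x => Real.log (L m θ0 x /
        ((∑ τ ∈ Finset.univ.erase θTX, L m τ x) / ((H:ℝ)-1))))
      (Real.measurable_log.comp ((hLmeas m θ0).div (hLbar_meas m))) ?_
    refine Integrable.mono'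
      (integrable_finset_sum (μ := ν m) (Finset.univ.erase θTX)
        (fun τ _ => (hKL m θ0 τ).abs)) ?_ (Eventually.of_forall fun x => ?_)
    · exact ((Real.measurable_log.comp
        ((hLmeas m θ0).div (hLbar_meas m))).mul (hLmeas m θ0)).aestronglyMeasurable
    · show ‖Real.log (L m θ0 x / ((∑ τ ∈ Finset.univ.erase θTX, L m τ x) / ((H:ℝ)-1)))
          * L m θ0 x‖ ≤ ∑ τ ∈ Finset.univ.erase θTX, |L m θ0 x * Real.log (L m θ0 x / L m τ x)|
      rw [Real.norm_eq_abs, abs_mul, abs_of_pos (hLpos m θ0 x)]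
      calc |Real.log (L m θ0 x / ((∑ τ ∈ Finset.univ.erase θTX, L m τ x) / ((H:ℝ)-1)))|
            * L m θ0 x
          ≤ (∑ τ ∈ Finset.univ.erase θTX, |Real.log (L m θ0 x / L m τ x)|) * L m θ0 x :=
            mul_le_mul_of_nonneg_right
              (aux_logbar_bound hH θTX θ0 (L m) (fun τ y => hLpos m τ y) x) (hLpos m θ0 x).le
        _ = ∑ τ ∈ Finset.univ.erase θTX, |L m θ0 x * Real.log (L m θ0 x / L m τ x)| := by
            rw [Finset.sum_mul]
            exact Finset.sum_congr rfl fun τ _ => by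
              rw [abs_mul, abs_of_pos (hLpos m θ0 x)]; ring
  have hfsplit : ∀ m (x : X m), F m x =
      Real.log (L m θ0 x / L m θTX x) - Real.log (L m θ0 x /
        ((∑ τ ∈ Finset.univ.erase θTX, L m τ x) / ((H:ℝ)-1))) := by
    intro m x
    simp only [hFdef]
    rw [Real.log_div (hLbne m x).ne' (hLpos m θTX x).ne',
      Real.log_div (hLpos m θ0 x).ne' (hLpos m θTX x).ne',
      Real.log_div (hLpos m θ0 x).ne' (hLbne m x).ne']
    ring
  have hYint : ∀ m, Integrable (Y m 0) P := by
    intro m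
    refine ((hint1 m θTX).sub (hint2 m)).congr (Eventually.of_forall fun ω => ?_)
    simp only [hYdef, Nat.zero_add]
    exact (hfsplit m (ξ m 1 ω)).symm
  have hYmean : ∀ m, ∫ ω, Y m 0 ω ∂P =
      (∫ ω, Real.log (L m θ0 (ξ m 1 ω) / L m θTX (ξ m 1 ω)) ∂P)
      - ∫ ω, Real.log (L m θ0 (ξ m 1 ω) /
          ((∑ τ ∈ Finset.univ.erase θTX, L m τ (ξ m 1 ω)) / ((H:ℝ)-1))) ∂P := by
    intro m
    rw [← integral_sub (hint1 m θTX) (hint2 m)]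
    refine integral_congr_ae (Eventually.of_forall fun ω => ?_)
    simp only [hYdef, Nat.zero_add]
    exact hfsplit m (ξ m 1 ω)
  -- ===== SLLN =====
  have hYmeas : ∀ m j, Measurable (Y m j) := fun m j => (hF_meas m).comp (hξmeas m (j+1))
  have hident : ∀ m (j : ℕ), IdentDistrib (Y m j) (Y m 0) P P := by
    intro m j
    have h1 : IdentDistrib (ξ m (j+1)) (ξ m (0+1)) P P :=
      ⟨(hξmeas m (j+1)).aemeasurable, (hξmeas m 1).aemeasurable, by
        rw [hξdist m (j+1) (by omega), hξdist m 1 le_rfl]⟩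
    exact h1.comp (hF_meas m)
  have hindep : ∀ m : Fin K, Pairwise (Function.onFun (IndepFun · · P) (Y m)) := by
    intro m
    have h1 := hξindep.comp (fun _ : ℕ => fun s : (∀ k', X k') => F m (s m))
      (fun _ => (hF_meas m).comp (measurable_pi_apply m))
    intro i j hij
    exact h1.indepFun hij
  have habsindep : ∀ m : Fin K, Pairwise (Function.onFun (IndepFun · · P) (fun j ω => |Y m j ω|)) := by
    intro m
    have h1 := hξindep.comp (fun _ : ℕ => fun s : (∀ k', X k') => |F m (s m)|)
      (fun _ => ((hF_meas m).comp (measurable_pi_apply m)).abs)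
    intro i j hij
    exact h1.indepFun hij
  have hSLLN : ∀ m, ∀ᵐ ω ∂P, Tendsto (fun n => (∑ j ∈ Finset.range n, Y m j ω)/(n:ℝ))
      atTop (𝓝 (∫ ω, Y m 0 ω ∂P)) :=
    fun m => strong_law_ae_real _ (hYint m) (hindep m) (fun j => hident m j)
  have hSLLNabs : ∀ m, ∀ᵐ ω ∂P, Tendsto (fun n => (∑ j ∈ Finset.range n, |Y m j ω|)/(n:ℝ))
      atTop (𝓝 (∫ ω, |Y m 0 ω| ∂P)) :=
    fun m => strong_law_ae_real _ (hYint m).abs (habsindep m)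
      (fun j => (hident m j).comp measurable_abs)

  -- ===== matrix power facts =====
  have hB0 : ∀ ℓ j, 0 ≤ B ℓ j := fun ℓ j => ha_nonneg ℓ j
  have hBs : ∀ j, ∑ ℓ, B ℓ j = 1 := fun j => ha_stoch j
  have hpow0 : ∀ p (ℓ j : Fin K), 0 ≤ (B ^ p) ℓ j := by
    intro p
    induction p with
    | zero => intro ℓ j; rw [pow_zero, Matrix.one_apply]; split <;> norm_num
    | succ p ih =>
      intro ℓ j
      rw [pow_succ, Matrix.mul_apply]
      exact Finset.sum_nonneg fun x _ => mul_nonneg (ih ℓ x) (hB0 x j)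
  have hpows : ∀ p (j : Fin K), ∑ ℓ, (B ^ p) ℓ j = 1 := by
    intro p
    induction p with
    | zero => intro j; simp [Matrix.one_apply]
    | succ p ih =>
      intro j
      simp only [pow_succ, Matrix.mul_apply]
      rw [Finset.sum_comm]
      have h1 : ∀ x, ∑ ℓ, (B ^ p) ℓ x * B x j = B x j := by
        intro x
        rw [← Finset.sum_mul, ih x, one_mul]
      rw [Finset.sum_congr rfl fun x _ => h1 x]
      exact hBs j
  have hentry : ∀ p (ℓ j : Fin K), (B ^ p) ℓ j ≤ 1 := by
    intro p ℓ j
    have := Finset.single_le_sum (f := fun ℓ => (B ^ p) ℓ j)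
      (fun x _ => hpow0 p x j) (Finset.mem_univ ℓ)
    rw [hpows p j] at this
    exact this
  have hδlim : Tendsto (fun p => ∑ ℓ, |(B ^ p) ℓ k - v ℓ|) atTop (𝓝 0) :=
    aux_markov hK B hB0 hBs ha_prim v hv_pos hv_sum (fun ℓ => hv_eig ℓ) k
  have hδ0 : ∀ p, 0 ≤ ∑ ℓ, |(B ^ p) ℓ k - v ℓ| :=
    fun p => Finset.sum_nonneg fun ℓ _ => abs_nonneg _
  have hδC : ∀ p, (∑ ℓ, |(B ^ p) ℓ k - v ℓ|) ≤ 2 := by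
    intro p
    calc ∑ ℓ, |(B ^ p) ℓ k - v ℓ| ≤ ∑ ℓ, ((B ^ p) ℓ k + v ℓ) := by
          refine Finset.sum_le_sum fun ℓ _ => ?_
          calc |(B ^ p) ℓ k - v ℓ| ≤ |(B ^ p) ℓ k| + |v ℓ| := abs_sub _ _
            _ = (B ^ p) ℓ k + v ℓ := by
                rw [abs_of_nonneg (hpow0 p ℓ k), abs_of_nonneg (hv_pos ℓ).le]
      _ = 2 := by rw [Finset.sum_add_distrib, hpows p k, hv_sum]; norm_num
  -- ===== rewrite the limit constant =====
  have hconst : (∑ m, v m * (∫ ω, Real.log (L m θ0 (ξ m 1 ω) / L m θTX (ξ m 1 ω)) ∂P))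
      - (∑ m, v m * (∫ ω, Real.log (L m θ0 (ξ m 1 ω) /
          ((∑ τ ∈ Finset.univ.erase θTX, L m τ (ξ m 1 ω)) / ((H:ℝ) - 1))) ∂P))
      = ∑ m, v m * (∫ ω, Y m 0 ω ∂P) := by
    rw [← Finset.sum_sub_distrib]
    refine Finset.sum_congr rfl fun m _ => ?_
    rw [hYmean m]
    ring
  rw [hconst]
  -- ===== a.s. conclusion =====
  have hae := (ae_all_iff.2 hSLLN).and (ae_all_iff.2 hSLLNabs)
  filter_upwards [hae] with ω hω
  obtain ⟨hω1, hω2⟩ := hω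
  -- decomposition pieces
  set E1 : ℕ → ℝ := fun i => ∑ ℓ, (B ^ (i-1)) ℓ k * β ℓ 1 ω with hE1def
  set E2 : ℕ → ℝ := fun i => ∑ j ∈ Finset.Icc 2 i, ∑ ℓ, v ℓ * Y ℓ (j-1) ω with hE2def
  set E3 : ℕ → ℝ := fun i =>
    ∑ j ∈ Finset.Icc 2 i, ∑ ℓ, ((B ^ (i+1-j)) ℓ k - v ℓ) * Y ℓ (j-1) ω with hE3def
  have hsplit : ∀ i : ℕ, 1 ≤ i →
      Real.log (μb k i θ ω / μb k i θTX ω) = E1 i + (E2 i + E3 i) := by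
    intro i hi
    have h1 : β k i ω = E1 i
        + ∑ j ∈ Finset.Icc 2 i, ∑ ℓ, (B ^ (i+1-j)) ℓ k * Y ℓ (j-1) ω := hclosed i ω hi k
    have h2 : ∀ j, (∑ ℓ, (B ^ (i+1-j)) ℓ k * Y ℓ (j-1) ω)
        = (∑ ℓ, v ℓ * Y ℓ (j-1) ω) + ∑ ℓ, ((B ^ (i+1-j)) ℓ k - v ℓ) * Y ℓ (j-1) ω := by
      intro j
      rw [← Finset.sum_add_distrib]
      exact Finset.sum_congr rfl fun ℓ _ => by ring
    have h3 : ∑ j ∈ Finset.Icc 2 i, ∑ ℓ, (B ^ (i+1-j)) ℓ k * Y ℓ (j-1) ω = E2 i + E3 i := by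
      rw [hE2def, hE3def, ← Finset.sum_add_distrib]
      exact Finset.sum_congr rfl fun j _ => h2 j
    have h4 : Real.log (μb k i θ ω / μb k i θTX ω) = β k i ω := by rw [hβdef]
    rw [h4, h1, h3]
  -- T1
  have hT1 : Tendsto (fun i : ℕ => E1 i / i) atTop (𝓝 0) := by
    refine squeeze_zero_norm (fun i => ?_)
      (tendsto_const_div_atTop_nhds_zero_nat (∑ ℓ, |β ℓ 1 ω|))
    rw [Real.norm_eq_abs, abs_div, Nat.abs_cast]
    refine div_le_div_of_nonneg_right ?_ (Nat.cast_nonneg i)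
    calc |E1 i| ≤ ∑ ℓ, |(B ^ (i-1)) ℓ k * β ℓ 1 ω| := Finset.abs_sum_le_sum_abs _ _
      _ ≤ ∑ ℓ, |β ℓ 1 ω| := by
          refine Finset.sum_le_sum fun ℓ _ => ?_
          rw [abs_mul, abs_of_nonneg (hpow0 (i-1) ℓ k)]
          nlinarith [hentry (i-1) ℓ k, abs_nonneg (β ℓ 1 ω), hpow0 (i-1) ℓ k]
  -- T2
  have hresum : ∀ (ℓ : Fin K) (i : ℕ), 1 ≤ i →
      ∑ j ∈ Finset.Icc 2 i, Y ℓ (j-1) ω = (∑ t ∈ Finset.range i, Y ℓ t ω) - Y ℓ 0 ω := by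
    intro ℓ i
    induction i with
    | zero => intro hi; omega
    | succ n ih =>
      intro _
      rcases Nat.eq_zero_or_pos n with h|h
      · subst h
        have he : Finset.Icc 2 1 = (∅ : Finset ℕ) := by decide
        rw [he]
        simp
      · have hIcc := Finset.sum_Icc_succ_top (by omega : 2 ≤ n + 1) (fun j => Y ℓ (j-1) ω)
        rw [hIcc, ih h, Finset.sum_range_succ]
        have h2 : (n+1) - 1 = n := by omega
        rw [h2]
        ring
  have hT2 : Tendsto (fun i : ℕ => E2 i / i) atTop (𝓝 (∑ m, v m * (∫ ω', Y m 0 ω' ∂P))) := by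
    have h1 : Tendsto (fun i : ℕ => ∑ ℓ, v ℓ * ((∑ t ∈ Finset.range i, Y ℓ t ω)/(i:ℝ)
        - Y ℓ 0 ω / i)) atTop (𝓝 (∑ m, v m * ((∫ ω', Y m 0 ω' ∂P) - 0))) := by
      refine tendsto_finset_sum _ fun ℓ _ => ?_
      exact ((hω1 ℓ).sub (tendsto_const_div_atTop_nhds_zero_nat (Y ℓ 0 ω))).const_mul (v ℓ)
    simp only [sub_zero] at h1
    refine h1.congr' ?_
    filter_upwards [eventually_ge_atTop 1] with i hi
    have e : E2 i / (i:ℝ) = ∑ ℓ, v ℓ * ((∑ t ∈ Finset.range i, Y ℓ t ω)/(i:ℝ)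
        - Y ℓ 0 ω / i) := by
      simp only [hE2def]
      rw [Finset.sum_comm, Finset.sum_div]
      refine Finset.sum_congr rfl fun ℓ _ => ?_
      rw [← Finset.mul_sum, hresum ℓ i hi]
      ring
    rw [e]
  -- T3
  have hT3 : Tendsto (fun i : ℕ => E3 i / i) atTop (𝓝 0) := by
    have hu0 : ∀ j : ℕ, (0:ℝ) ≤ ∑ ℓ, |Y ℓ (j-1) ω| :=
      fun j => Finset.sum_nonneg fun ℓ _ => abs_nonneg _
    have hU : Tendsto (fun n : ℕ => (∑ j ∈ Finset.range n, ∑ ℓ, |Y ℓ ((j+1)-1) ω|)/(n:ℝ))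
        atTop (𝓝 (∑ ℓ, ∫ ω', |Y ℓ 0 ω'| ∂P)) := by
      have h1 : Tendsto (fun n : ℕ => ∑ ℓ, (∑ j ∈ Finset.range n, |Y ℓ j ω|)/(n:ℝ))
          atTop (𝓝 (∑ ℓ, ∫ ω', |Y ℓ 0 ω'| ∂P)) :=
        tendsto_finset_sum _ fun ℓ _ => hω2 ℓ
      refine h1.congr fun n => ?_
      rw [← Finset.sum_div]
      congr 1
      rw [Finset.sum_comm]
      refine Finset.sum_congr rfl fun j _ => Finset.sum_congr rfl fun ℓ _ => ?_
      congr 1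
    have happ := aux_weighted_cesaro (C := 2) (δ := fun p => ∑ ℓ, |(B ^ p) ℓ k - v ℓ|)
      (u := fun j => ∑ ℓ, |Y ℓ (j-1) ω|) hδ0 hδC hδlim hu0 hU
    refine squeeze_zero_norm (fun i => ?_) happ
    rw [Real.norm_eq_abs, abs_div, Nat.abs_cast]
    refine div_le_div_of_nonneg_right ?_ (Nat.cast_nonneg i)
    calc |E3 i| ≤ ∑ j ∈ Finset.Icc 2 i, |∑ ℓ, ((B ^ (i+1-j)) ℓ k - v ℓ) * Y ℓ (j-1) ω| :=
          Finset.abs_sum_le_sum_abs _ _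
      _ ≤ ∑ j ∈ Finset.Icc 2 i, (∑ ℓ, |(B ^ (i+1-j)) ℓ k - v ℓ|) * ∑ ℓ, |Y ℓ (j-1) ω| := by
          refine Finset.sum_le_sum fun j _ => ?_
          calc |∑ ℓ, ((B ^ (i+1-j)) ℓ k - v ℓ) * Y ℓ (j-1) ω|
              ≤ ∑ ℓ, |((B ^ (i+1-j)) ℓ k - v ℓ) * Y ℓ (j-1) ω| :=
                Finset.abs_sum_le_sum_abs _ _
            _ ≤ ∑ ℓ, (∑ n, |(B ^ (i+1-j)) n k - v n|) * |Y ℓ (j-1) ω| := by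
                refine Finset.sum_le_sum fun ℓ _ => ?_
                rw [abs_mul]
                refine mul_le_mul_of_nonneg_right ?_ (abs_nonneg _)
                exact Finset.single_le_sum (f := fun n => |(B ^ (i+1-j)) n k - v n|)
                  (fun n _ => abs_nonneg _) (Finset.mem_univ ℓ)
            _ = (∑ ℓ, |(B ^ (i+1-j)) ℓ k - v ℓ|) * ∑ ℓ, |Y ℓ (j-1) ω| :=
                (Finset.mul_sum _ _ _).symm
  -- assemble
  have hfinal := hT1.add (hT2.add hT3)
  rw [zero_add, add_zero] at hfinal
  refine Tendsto.congr' ?_ hfinal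
  filter_upwards [eventually_ge_atTop 1] with i hi
  rw [hsplit i hi]
  ring
end

section
/- Lemma 2, parts 1–2 (Submartingale sequence). Let θ_TX = θ₀ and run the partial-information algorithm with self-awareness. Define m_i := Σ_{k=1}^K v_k log μ_{k,i}(θ_TX), the filtration F_j := σ(ξ_1,…,ξ_j), and for a belief vector μ in the simplex, δ_k(μ) := E[log(L_k(ξ_{k,i}|θ₀) / Σ_{θ∈Θ} μ(θ) L_k(ξ_{k,i}|θ))]. Then: (1) E[m_i | F_{i−1}] ≥ m_{i−1} + Σ_{k=1}^K v_k δ_k(μ_{k,i−1}) almost surely; (2) the sequence (m_i) is a nonpositive submartingale with respect to the filtration (F_i). -/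
open MeasureTheory ProbabilityTheory Filter Topology
open scoped ENNReal NNReal

lemma sw_exp_sum_le {ι : Type*} (s : Finset ι) (w x : ι → ℝ)
    (hw : ∀ i ∈ s, 0 ≤ w i) (hw1 : ∑ i ∈ s, w i = 1) (hx : ∀ i ∈ s, 0 < x i) :
    Real.exp (∑ i ∈ s, w i * Real.log (x i)) ≤ ∑ i ∈ s, w i * x i := by
  have h : Real.exp (∑ i ∈ s, w i * Real.log (x i)) = ∏ i ∈ s, x i ^ w i := by
    rw [Real.exp_sum]
    refine Finset.prod_congr rfl fun i hi => ?_
    rw [Real.rpow_def_of_pos (hx i hi), mul_comm]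
  rw [h]
  exact Real.geom_mean_le_arith_mean_weighted s w x hw hw1 fun i hi => (hx i hi).le

lemma sw_condexp_indep {Ω α β : Type*} {m' : MeasurableSpace Ω} [mΩ : MeasurableSpace Ω]
    [mα : MeasurableSpace α] [mβ : MeasurableSpace β]
    (P : Measure Ω) [IsProbabilityMeasure P]
    (hm' : m' ≤ mΩ)
    {Y : Ω → α} {Xf : Ω → β} (hY : Measurable[m'] Y) (hX : Measurable Xf)
    (hindep : Indep m' (MeasurableSpace.comap Xf mβ) P)
    {g : α → β → ℝ} (hg : Measurable (Function.uncurry g))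
    (hint : Integrable (fun ω => g (Y ω) (Xf ω)) P) :
    (fun ω => ∫ ω', g (Y ω) (Xf ω') ∂P) =ᵐ[P] P[(fun ω => g (Y ω) (Xf ω)) | m'] := by
  have hYm : Measurable Y := hY.mono hm' le_rfl
  haveI : IsProbabilityMeasure (P.map Xf) := Measure.isProbabilityMeasure_map hX.aemeasurable
  haveI : IsProbabilityMeasure (P.map Y) := Measure.isProbabilityMeasure_map hYm.aemeasurable
  set φ : α → ℝ := fun y => ∫ b, g y b ∂(P.map Xf) with hφdef
  have hgsm : StronglyMeasurable (Function.uncurry g) := hg.stronglyMeasurable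
  have hφsm : StronglyMeasurable φ := hgsm.integral_prod_right'
  -- the law of (Y, Xf) is a product law
  have hindepYX : IndepFun Y Xf P :=
    (IndepFun_iff_Indep Y Xf P).2 (indep_of_indep_of_le_left hindep hY.comap_le)
  have hmapYX : P.map (fun ω => (Y ω, Xf ω)) = (P.map Y).prod (P.map Xf) :=
    (indepFun_iff_map_prod_eq_prod_map_map hYm.aemeasurable hX.aemeasurable).1 hindepYX
  have hintYX : Integrable (Function.uncurry g) ((P.map Y).prod (P.map Xf)) := by
    rw [← hmapYX]
    exact (integrable_map_measure hgsm.aestronglyMeasurable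
      (hYm.prodMk hX).aemeasurable).2 hint
  have hφint : Integrable (fun ω => φ (Y ω)) P := by
    have h1 : Integrable φ (P.map Y) := hintYX.integral_prod_left
    exact (integrable_map_measure hφsm.aestronglyMeasurable hYm.aemeasurable).1 h1
  -- pointwise rewriting of φ ∘ Y
  have hφeq : ∀ y : α, φ y = ∫ ω', g y (Xf ω') ∂P := by
    intro y
    exact integral_map hX.aemeasurable
      ((hg.comp measurable_prodMk_left).stronglyMeasurable.aestronglyMeasurable)
  have main : (fun ω => φ (Y ω)) =ᵐ[P] P[(fun ω => g (Y ω) (Xf ω)) | m'] := by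
    refine ae_eq_condExp_of_forall_setIntegral_eq hm' hint
      (fun s _ _ => hφint.integrableOn) ?_ ?_
    · intro s hs _
      have hsΩ : MeasurableSet s := hm' s hs
      set χ : Ω → ℝ := s.indicator (fun _ => (1:ℝ)) with hχdef
      have hχm' : Measurable[m'] χ := measurable_const.indicator hs
      have hχm : Measurable χ := hχm'.mono hm' le_rfl
      set W : Ω → ℝ × α := fun ω => (χ ω, Y ω) with hWdef
      have hWm' : Measurable[m'] W := hχm'.prodMk hY
      have hWm : Measurable W := hWm'.mono hm' le_rfl
      haveI : IsProbabilityMeasure (P.map W) := Measure.isProbabilityMeasure_map hWm.aemeasurable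
      have hindepWX : IndepFun W Xf P :=
        (IndepFun_iff_Indep W Xf P).2 (indep_of_indep_of_le_left hindep hWm'.comap_le)
      have hmapWX : P.map (fun ω => (W ω, Xf ω)) = (P.map W).prod (P.map Xf) :=
        (indepFun_iff_map_prod_eq_prod_map_map hWm.aemeasurable hX.aemeasurable).1 hindepWX
      set h : (ℝ × α) × β → ℝ := fun p => p.1.1 * g p.1.2 p.2 with hhdef
      have hhm : Measurable h := by
        exact ((measurable_fst.comp measurable_fst).mul
          (hg.comp ((measurable_snd.comp measurable_fst).prodMk measurable_snd)))
      have hintχg : Integrable (fun ω => χ ω * g (Y ω) (Xf ω)) P := by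
        refine hint.bdd_mul hχm.aestronglyMeasurable (c := 1) (ae_of_all _ fun ω => ?_)
        by_cases hω : ω ∈ s <;> simp [hχdef, Set.indicator_apply, hω]
      have hinth : Integrable h ((P.map W).prod (P.map Xf)) := by
        rw [← hmapWX]
        exact (integrable_map_measure hhm.stronglyMeasurable.aestronglyMeasurable
          (hWm.prodMk hX).aemeasurable).2 hintχg
      have step1 : ∫ x in s, g (Y x) (Xf x) ∂P = ∫ ω, χ ω * g (Y ω) (Xf ω) ∂P := by
        rw [← integral_indicator hsΩ]
        congr 1
        funext ω
        by_cases hω : ω ∈ s <;> simp [hχdef, Set.indicator_apply, hω]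
      have step2 : ∫ ω, χ ω * g (Y ω) (Xf ω) ∂P = ∫ p, h p ∂((P.map W).prod (P.map Xf)) := by
        rw [← hmapWX, integral_map (hWm.prodMk hX).aemeasurable
          hhm.stronglyMeasurable.aestronglyMeasurable]
      have step3 : ∫ p, h p ∂((P.map W).prod (P.map Xf)) = ∫ u, u.1 * φ u.2 ∂(P.map W) := by
        rw [integral_prod h hinth]
        congr 1
        funext u
        simp only [hhdef, hφdef]
        rw [integral_const_mul]
      have step4 : ∫ u, u.1 * φ u.2 ∂(P.map W) = ∫ ω, χ ω * φ (Y ω) ∂P := by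
        rw [integral_map hWm.aemeasurable]
        exact ((measurable_fst.mul (hφsm.measurable.comp
          measurable_snd)).stronglyMeasurable.aestronglyMeasurable)
      have step5 : ∫ ω, χ ω * φ (Y ω) ∂P = ∫ x in s, φ (Y x) ∂P := by
        rw [← integral_indicator hsΩ]
        congr 1
        funext ω
        by_cases hω : ω ∈ s <;> simp [hχdef, Set.indicator_apply, hω]
      rw [step1, step2, step3, step4, step5]
    · exact StronglyMeasurable.aestronglyMeasurable (hφsm.comp_measurable hY)
  refine EventuallyEq.trans ?_ main
  filter_upwards with ω
  exact (hφeq (Y ω)).symm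

lemma sw_log_ratio_bound {H : ℕ} (c : Fin H → ℝ) (hc : ∀ θ, 0 < c θ) (θ0 : Fin H)
    (y : Fin H → ℝ) (hy : ∀ θ, 0 < y θ) (hy1 : ∑ θ, y θ = 1) :
    |Real.log (c θ0 / ∑ θ', y θ' * c θ')| ≤ ∑ θ', |Real.log (c θ0 / c θ')| := by
  obtain ⟨θ1, -, h1⟩ := Finset.exists_max_image Finset.univ c ⟨θ0, Finset.mem_univ _⟩
  obtain ⟨θ2, -, h2⟩ := Finset.exists_min_image Finset.univ c ⟨θ0, Finset.mem_univ _⟩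
  set q := ∑ θ', y θ' * c θ' with hqdef
  have hqpos : 0 < q :=
    Finset.sum_pos (fun θ _ => mul_pos (hy θ) (hc θ)) ⟨θ0, Finset.mem_univ _⟩
  have hq_le : q ≤ c θ1 := by
    calc q ≤ ∑ θ', y θ' * c θ1 :=
          Finset.sum_le_sum fun θ _ =>
            mul_le_mul_of_nonneg_left (h1 θ (Finset.mem_univ θ)) (hy θ).le
      _ = c θ1 := by rw [← Finset.sum_mul, hy1, one_mul]
  have h_le_q : c θ2 ≤ q := by
    calc c θ2 = ∑ θ', y θ' * c θ2 := by rw [← Finset.sum_mul, hy1, one_mul]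
      _ ≤ q := Finset.sum_le_sum fun θ _ =>
            mul_le_mul_of_nonneg_left (h2 θ (Finset.mem_univ θ)) (hy θ).le
  have hlog : ∀ θ : Fin H, Real.log (c θ0 / c θ) = Real.log (c θ0) - Real.log (c θ) :=
    fun θ => Real.log_div (hc θ0).ne' (hc θ).ne'
  rw [Real.log_div (hc θ0).ne' hqpos.ne']
  have hlogq1 : Real.log q ≤ Real.log (c θ1) := Real.log_le_log hqpos hq_le
  have hlogq2 : Real.log (c θ2) ≤ Real.log q := Real.log_le_log (hc θ2) h_le_q
  have habs : ∀ θ : Fin H, |Real.log (c θ0) - Real.log (c θ)| ≤ ∑ θ', |Real.log (c θ0 / c θ')| := by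
    intro θ
    rw [← hlog θ]
    exact Finset.single_le_sum (f := fun θ' => |Real.log (c θ0 / c θ')|)
      (fun θ' _ => abs_nonneg _) (Finset.mem_univ θ)
  rcases le_total (Real.log (c θ0)) (Real.log q) with h | h
  · rw [abs_of_nonpos (by linarith), neg_sub]
    calc Real.log q - Real.log (c θ0) ≤ Real.log (c θ1) - Real.log (c θ0) := by linarith
      _ ≤ |Real.log (c θ0) - Real.log (c θ1)| := by rw [abs_sub_comm]; exact le_abs_self _
      _ ≤ _ := habs θ1
  · rw [abs_of_nonneg (by linarith)]
    calc Real.log (c θ0) - Real.log q ≤ Real.log (c θ0) - Real.log (c θ2) := by linarith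
      _ ≤ |Real.log (c θ0) - Real.log (c θ2)| := le_abs_self _
      _ ≤ _ := habs θ2

lemma sw_gibbs {χ : Type*} [MeasurableSpace χ] (ν : Measure χ) {H : ℕ}
    (L : Fin H → χ → ℝ) (θ0 : Fin H)
    (hLpos : ∀ θ x, 0 < L θ x)
    (hLdens : ∀ θ, ∫ x, L θ x ∂ν = 1)
    (y : Fin H → ℝ) (hy : ∀ θ, 0 < y θ) (hy1 : ∑ θ, y θ = 1)
    (hint : Integrable (fun x => L θ0 x * Real.log (L θ0 x / ∑ θ', y θ' * L θ' x)) ν) :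
    0 ≤ ∫ x, L θ0 x * Real.log (L θ0 x / ∑ θ', y θ' * L θ' x) ∂ν := by
  have hq : ∀ x, 0 < ∑ θ', y θ' * L θ' x := fun x =>
    Finset.sum_pos (fun θ _ => mul_pos (hy θ) (hLpos θ x)) ⟨θ0, Finset.mem_univ _⟩
  have hLint : ∀ θ, Integrable (L θ) ν := by
    intro θ
    by_contra h
    have h1 := hLdens θ
    rw [integral_undef h] at h1
    exact one_ne_zero h1.symm
  have hqint : Integrable (fun x => ∑ θ', y θ' * L θ' x) ν :=
    integrable_finset_sum _ fun θ _ => (hLint θ).const_mul _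
  have hub : ∀ x, -(L θ0 x * Real.log (L θ0 x / ∑ θ', y θ' * L θ' x)) ≤
      (∑ θ', y θ' * L θ' x) - L θ0 x := by
    intro x
    set q := ∑ θ', y θ' * L θ' x with hqdef
    have h0 : 0 < L θ0 x := hLpos θ0 x
    have h1 : Real.log (q / L θ0 x) ≤ q / L θ0 x - 1 :=
      Real.log_le_sub_one_of_pos (div_pos (hq x) h0)
    have h2 : Real.log (q / L θ0 x) = -(Real.log (L θ0 x / q)) := by
      rw [Real.log_div (hq x).ne' h0.ne', Real.log_div h0.ne' (hq x).ne']; ring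
    have h3 : L θ0 x * Real.log (q / L θ0 x) ≤ L θ0 x * (q / L θ0 x - 1) :=
      mul_le_mul_of_nonneg_left h1 h0.le
    have h4 : L θ0 x * (q / L θ0 x - 1) = q - L θ0 x := by field_simp
    rw [h2] at h3
    rw [mul_neg] at h3
    linarith
  have hmono : ∫ x, -(L θ0 x * Real.log (L θ0 x / ∑ θ', y θ' * L θ' x)) ∂ν ≤
      ∫ x, ((∑ θ', y θ' * L θ' x) - L θ0 x) ∂ν :=
    integral_mono hint.neg (hqint.sub (hLint θ0)) hub
  have hval : ∫ x, ((∑ θ', y θ' * L θ' x) - L θ0 x) ∂ν = 0 := by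
    rw [integral_sub hqint (hLint θ0), integral_finset_sum _ fun θ _ => (hLint θ).const_mul _]
    have : ∀ θ : Fin H, ∫ x, y θ * L θ x ∂ν = y θ := by
      intro θ; rw [integral_const_mul, hLdens θ, mul_one]
    simp only [this]
    rw [hLdens θ0, hy1]
    ring
  rw [integral_neg] at hmono
  linarith [hmono.trans_eq hval]

lemma sw_integrable_withDensity {χ : Type*} [MeasurableSpace χ] (ν : Measure χ)
    (L0 : χ → ℝ) (hpos : ∀ x, 0 < L0 x) (hm : Measurable L0) (g : χ → ℝ) :
    Integrable g (ν.withDensity (fun x => ENNReal.ofReal (L0 x))) ↔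
      Integrable (fun x => L0 x * g x) ν := by
  have h : (fun x => ENNReal.ofReal (L0 x)) = fun x => ((L0 x).toNNReal : ℝ≥0∞) := rfl
  rw [h, integrable_withDensity_iff_integrable_smul hm.real_toNNReal]
  have h2 : (fun x => (L0 x).toNNReal • g x) = fun x => L0 x * g x := by
    funext x
    rw [NNReal.smul_def, Real.coe_toNNReal _ (hpos x).le, smul_eq_mul]
  rw [h2]

lemma sw_integral_withDensity {χ : Type*} [MeasurableSpace χ] (ν : Measure χ)
    (L0 : χ → ℝ) (hpos : ∀ x, 0 < L0 x) (hm : Measurable L0) (g : χ → ℝ) :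
    ∫ x, g x ∂(ν.withDensity (fun x => ENNReal.ofReal (L0 x))) = ∫ x, L0 x * g x ∂ν := by
  have h : (fun x => ENNReal.ofReal (L0 x)) = fun x => ((L0 x).toNNReal : ℝ≥0∞) := rfl
  rw [h, integral_withDensity_eq_integral_smul hm.real_toNNReal]
  congr 1
  funext x
  rw [NNReal.smul_def, Real.coe_toNNReal _ (hpos x).le, smul_eq_mul]
theorem submartingale_sequence_with_self_awareness
    {Ω : Type} [mΩ : MeasurableSpace Ω] (P : Measure Ω) [IsProbabilityMeasure P]
    (K H : ℕ) (hK : 0 < K) (hH : 2 ≤ H)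
    (X : Fin K → Type) [∀ k, MeasurableSpace (X k)]
    (ν : ∀ k, Measure (X k))
    (L : ∀ k : Fin K, Fin H → X k → ℝ)
    (θ0 : Fin H)
    (hLpos : ∀ k θ x, 0 < L k θ x)
    (hLmeas : ∀ k θ, Measurable (L k θ))
    (hLdens : ∀ k θ, ∫ x, L k θ x ∂(ν k) = 1)
    (ξ : ∀ k : Fin K, ℕ → Ω → X k)
    (hξmeas : ∀ k i, Measurable (ξ k i))
    (hξdist : ∀ k (i : ℕ), 1 ≤ i →
      Measure.map (ξ k i) P = (ν k).withDensity (fun x => ENNReal.ofReal (L k θ0 x)))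
    (hξindep : iIndepFun
      (fun (i : ℕ) (ω : Ω) (k : Fin K) => ξ k (i + 1) ω) P)
    (hKL : ∀ k θ θ',
      Integrable (fun x => L k θ x * Real.log (L k θ x / L k θ' x)) (ν k))
    (a : Fin K → Fin K → ℝ)
    (ha_nonneg : ∀ ℓ k, 0 ≤ a ℓ k)
    (ha_stoch : ∀ k, ∑ ℓ, a ℓ k = 1)
    (ha_prim : ∃ n : ℕ, ∀ ℓ k, 0 < ((Matrix.of a) ^ n) ℓ k)
    (v : Fin K → ℝ)
    (hv_pos : ∀ ℓ, 0 < v ℓ)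
    (hv_sum : ∑ ℓ, v ℓ = 1)
    (hv_eig : ∀ ℓ, ∑ k, a ℓ k * v k = v ℓ)
    (ha_self : ∀ k, 0 < a k k)
    (θTX : Fin H)
    (hθTX : θTX = θ0)
    (μb ψ ψh : Fin K → ℕ → Fin H → Ω → ℝ)
    (μinit : Fin K → Fin H → ℝ)
    (hμinit_pos : ∀ k θ, 0 < μinit k θ)
    (hμinit_sum : ∀ k, ∑ θ, μinit k θ = 1)
    (hμb0 : ∀ k θ ω, μb k 0 θ ω = μinit k θ)
    (hψ : ∀ k (i : ℕ) θ ω, ψ k (i + 1) θ ω =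
      μb k i θ ω * L k θ (ξ k (i + 1) ω) /
        ∑ θ', μb k i θ' ω * L k θ' (ξ k (i + 1) ω))
    (hψh_tx : ∀ k (i : ℕ) ω, ψh k (i + 1) θTX ω = ψ k (i + 1) θTX ω)
    (hψh_ntx : ∀ k (i : ℕ) θ ω, θ ≠ θTX →
      ψh k (i + 1) θ ω = (1 - ψ k (i + 1) θTX ω) / ((H : ℝ) - 1))
    (hcomb : ∀ k (i : ℕ) θ ω, μb k (i + 1) θ ω =
      Real.exp (a k k * Real.log (ψ k (i + 1) θ ω) +
          ∑ ℓ ∈ Finset.univ.erase k, a ℓ k * Real.log (ψh ℓ (i + 1) θ ω)) /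
        ∑ θ', Real.exp (a k k * Real.log (ψ k (i + 1) θ' ω) +
          ∑ ℓ ∈ Finset.univ.erase k, a ℓ k * Real.log (ψh ℓ (i + 1) θ' ω)))
    (F : Filtration ℕ mΩ)
    (hF : ∀ i : ℕ, F i = ⨆ k : Fin K, ⨆ j ∈ Finset.Icc 1 i,
      MeasurableSpace.comap (ξ k j) inferInstance) :
    (∀ i : ℕ,
      (fun ω => (∑ k, v k * Real.log (μb k i θTX ω)) +
          ∑ k, v k * ∫ ω', Real.log (L k θ0 (ξ k 1 ω') /
            ∑ θ', μb k i θ' ω * L k θ' (ξ k 1 ω')) ∂P)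
        ≤ᵐ[P] P[(fun ω => ∑ k, v k * Real.log (μb k (i + 1) θTX ω)) | F i]) ∧
    Submartingale (fun (i : ℕ) ω => ∑ k, v k * Real.log (μb k i θTX ω)) F P ∧
    (∀ i : ℕ, ∀ᵐ ω ∂P, (∑ k, v k * Real.log (μb k i θTX ω)) ≤ 0) := by
  subst hθTX
  have hH1 : (1 : ℝ) < (H : ℝ) := by exact_mod_cast lt_of_lt_of_le one_lt_two hH
  -- ## Step 1 : simplex invariants
  have hstep : ∀ i : ℕ, ((∀ k θ ω, 0 < μb k i θ ω) ∧ (∀ k ω, ∑ θ, μb k i θ ω = 1)) →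
      ((∀ k θ ω, 0 < ψ k (i+1) θ ω) ∧ (∀ k ω, ∑ θ, ψ k (i+1) θ ω = 1) ∧
       (∀ k θ ω, ψ k (i+1) θ ω < 1) ∧
       (∀ k θ ω, 0 < ψh k (i+1) θ ω) ∧ (∀ k ω, ∑ θ, ψh k (i+1) θ ω = 1) ∧
       (∀ k θ ω, 0 < μb k (i+1) θ ω) ∧ (∀ k ω, ∑ θ, μb k (i+1) θ ω = 1)) := by
    intro i ⟨ihpos, ihsum⟩
    have hden : ∀ k ω, 0 < ∑ θ', μb k i θ' ω * L k θ' (ξ k (i+1) ω) := fun k ω =>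
      Finset.sum_pos (fun θ _ => mul_pos (ihpos k θ ω) (hLpos k θ _)) ⟨θTX, Finset.mem_univ _⟩
    have hψpos : ∀ k θ ω, 0 < ψ k (i+1) θ ω := by
      intro k θ ω
      rw [hψ]
      exact div_pos (mul_pos (ihpos k θ ω) (hLpos k θ _)) (hden k ω)
    have hψsum : ∀ k ω, ∑ θ, ψ k (i+1) θ ω = 1 := by
      intro k ω
      simp only [hψ]
      rw [← Finset.sum_div, div_self (hden k ω).ne']
    have hψlt1 : ∀ k θ ω, ψ k (i+1) θ ω < 1 := by
      intro k θ ω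
      have h2 : 1 < Fintype.card (Fin H) := by simpa using lt_of_lt_of_le one_lt_two hH
      obtain ⟨θ', hθ'⟩ := Fintype.exists_ne_of_one_lt_card h2 θ
      have : ψ k (i+1) θ ω + ψ k (i+1) θ' ω ≤ ∑ θ'', ψ k (i+1) θ'' ω := by
        have := Finset.add_sum_erase Finset.univ (fun θ'' => ψ k (i+1) θ'' ω) (Finset.mem_univ θ)
        rw [← this]
        gcongr
        refine Finset.single_le_sum (f := fun θ'' => ψ k (i+1) θ'' ω)
          (fun θ'' _ => (hψpos k θ'' ω).le) ?_
        exact Finset.mem_erase.2 ⟨hθ', Finset.mem_univ _⟩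
      rw [hψsum k ω] at this
      linarith [hψpos k θ' ω]
    have hψhpos : ∀ k θ ω, 0 < ψh k (i+1) θ ω := by
      intro k θ ω
      by_cases hθ : θ = θTX
      · rw [hθ, hψh_tx]; exact hψpos k θTX ω
      · rw [hψh_ntx k i θ ω hθ]
        exact div_pos (by linarith [hψlt1 k θTX ω]) (by linarith)
    have hψhsum : ∀ k ω, ∑ θ, ψh k (i+1) θ ω = 1 := by
      intro k ω
      rw [← Finset.add_sum_erase Finset.univ (fun θ => ψh k (i+1) θ ω) (Finset.mem_univ θTX)]
      have hcongr : ∑ θ ∈ Finset.univ.erase θTX, ψh k (i+1) θ ω =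
          ∑ _θ ∈ Finset.univ.erase θTX, (1 - ψ k (i+1) θTX ω) / ((H : ℝ) - 1) :=
        Finset.sum_congr rfl fun θ hθ => hψh_ntx k i θ ω (Finset.mem_erase.1 hθ).1
      rw [hψh_tx, hcongr, Finset.sum_const, Finset.card_erase_of_mem (Finset.mem_univ _)]
      have hcard : (Finset.univ : Finset (Fin H)).card = H := by simp
      rw [hcard]
      have hHcast : ((H - 1 : ℕ) : ℝ) = (H : ℝ) - 1 := by
        have : 1 ≤ H := le_trans one_le_two hH
        push_cast [this]
        ring
      rw [nsmul_eq_mul, hHcast, mul_comm ((H:ℝ)-1),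
        div_mul_cancel₀ _ (by linarith : (H:ℝ)-1 ≠ 0)]
      ring
    have hμden : ∀ k ω, 0 < ∑ θ', Real.exp (a k k * Real.log (ψ k (i + 1) θ' ω) +
        ∑ ℓ ∈ Finset.univ.erase k, a ℓ k * Real.log (ψh ℓ (i + 1) θ' ω)) := fun k ω =>
      Finset.sum_pos (fun θ _ => Real.exp_pos _) ⟨θTX, Finset.mem_univ _⟩
    have hμpos' : ∀ k θ ω, 0 < μb k (i+1) θ ω := by
      intro k θ ω
      rw [hcomb]
      exact div_pos (Real.exp_pos _) (hμden k ω)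
    have hμsum' : ∀ k ω, ∑ θ, μb k (i+1) θ ω = 1 := by
      intro k ω
      simp only [hcomb]
      rw [← Finset.sum_div, div_self (hμden k ω).ne']
    exact ⟨hψpos, hψsum, hψlt1, hψhpos, hψhsum, hμpos', hμsum'⟩
  have hsimp : ∀ i : ℕ, (∀ k θ ω, 0 < μb k i θ ω) ∧ (∀ k ω, ∑ θ, μb k i θ ω = 1) := by
    intro i
    induction i with
    | zero =>
      constructor
      · intro k θ ω; rw [hμb0]; exact hμinit_pos k θ
      · intro k ω; simp only [hμb0]; exact hμinit_sum k
    | succ i ih =>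
      obtain ⟨-, -, -, -, -, h6, h7⟩ := hstep i ih
      exact ⟨h6, h7⟩
  have hμpos : ∀ i k θ ω, 0 < μb k i θ ω := fun i => (hsimp i).1
  have hμsum : ∀ i k ω, ∑ θ, μb k i θ ω = 1 := fun i => (hsimp i).2
  have hψfacts := fun i => hstep i (hsimp i)
  have hμle1 : ∀ i k θ ω, μb k i θ ω ≤ 1 := by
    intro i k θ ω
    rw [← hμsum i k ω]
    exact Finset.single_le_sum (f := fun θ => μb k i θ ω)
      (fun θ _ => (hμpos i k θ ω).le) (Finset.mem_univ θ)
  -- ## Step 2 : measurability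
  have hμFmeas : ∀ i k θ, Measurable[F i] (μb k i θ) := by
    intro i
    induction i with
    | zero =>
      intro k θ
      have e : μb k 0 θ = fun _ => μinit k θ := funext fun ω => hμb0 k θ ω
      rw [e]
      exact measurable_const
    | succ i ih =>
      have hξF : ∀ k, Measurable[F (i+1)] (ξ k (i+1)) := by
        intro k
        apply Measurable.of_comap_le
        rw [hF (i+1)]
        refine le_trans ?_ (le_iSup _ k)
        exact le_iSup₂ (f := fun j (_ : j ∈ Finset.Icc 1 (i+1)) =>
          MeasurableSpace.comap (ξ k j) inferInstance) (i+1) (by simp)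
      have hμ' : ∀ k θ, Measurable[F (i+1)] (μb k i θ) :=
        fun k θ => (ih k θ).mono (F.mono (Nat.le_succ i)) le_rfl
      have hψm : ∀ k θ, Measurable[F (i+1)] (ψ k (i+1) θ) := by
        intro k θ
        have e : ψ k (i+1) θ = fun ω => μb k i θ ω * L k θ (ξ k (i+1) ω) /
            ∑ θ', μb k i θ' ω * L k θ' (ξ k (i+1) ω) := funext fun ω => hψ k i θ ω
        rw [e]
        exact ((hμ' k θ).mul ((hLmeas k θ).comp (hξF k))).div
          (Finset.measurable_sum _ fun θ' _ => (hμ' k θ').mul ((hLmeas k θ').comp (hξF k)))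
      have hψhm : ∀ k θ, Measurable[F (i+1)] (ψh k (i+1) θ) := by
        intro k θ
        by_cases hθ : θ = θTX
        · have e : ψh k (i+1) θ = fun ω => ψ k (i+1) θTX ω :=
            funext fun ω => by rw [hθ]; exact hψh_tx k i ω
          rw [e]
          exact hψm k θTX
        · have e : ψh k (i+1) θ = fun ω => (1 - ψ k (i+1) θTX ω) / ((H:ℝ) - 1) :=
            funext fun ω => hψh_ntx k i θ ω hθ
          rw [e]
          exact (measurable_const.sub (hψm k θTX)).div_const _
      intro k θ
      have e : μb k (i+1) θ = fun ω =>
          Real.exp (a k k * Real.log (ψ k (i+1) θ ω) +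
            ∑ ℓ ∈ Finset.univ.erase k, a ℓ k * Real.log (ψh ℓ (i+1) θ ω)) /
          ∑ θ', Real.exp (a k k * Real.log (ψ k (i+1) θ' ω) +
            ∑ ℓ ∈ Finset.univ.erase k, a ℓ k * Real.log (ψh ℓ (i+1) θ' ω)) :=
        funext fun ω => hcomb k i θ ω
      rw [e]
      have hterm : ∀ θ', Measurable[F (i+1)] (fun ω => a k k * Real.log (ψ k (i+1) θ' ω) +
          ∑ ℓ ∈ Finset.univ.erase k, a ℓ k * Real.log (ψh ℓ (i+1) θ' ω)) := by
        intro θ'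
        exact (((hψm k θ').log).const_mul _).add
          (Finset.measurable_sum _ fun ℓ _ => ((hψhm ℓ θ').log).const_mul _)
      exact ((hterm θ).exp).div (Finset.measurable_sum _ fun θ' _ => (hterm θ').exp)

  have hμmeas : ∀ i k θ, Measurable (μb k i θ) :=
    fun i k θ => (hμFmeas i k θ).mono (F.le i) le_rfl
  -- ## Step 3 : the pointwise key inequality
  have key : ∀ (i : ℕ) (ω : Ω),
      (∑ k, v k * Real.log (μb k i θTX ω)) +
        (∑ k, v k * Real.log (L k θTX (ξ k (i+1) ω) /
          ∑ θ', μb k i θ' ω * L k θ' (ξ k (i+1) ω))) ≤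
      ∑ k, v k * Real.log (μb k (i+1) θTX ω) := by
    intro i ω
    obtain ⟨hψpos', hψsum', hψlt1', hψhpos', hψhsum', hμp', hμs'⟩ := hψfacts i
    have hden : ∀ k, 0 < ∑ θ', μb k i θ' ω * L k θ' (ξ k (i+1) ω) := fun k =>
      Finset.sum_pos (fun θ _ => mul_pos (hμpos i k θ ω) (hLpos k θ _)) ⟨θTX, Finset.mem_univ _⟩
    have stepA : ∀ k, ∑ ℓ, a ℓ k * Real.log (ψ ℓ (i+1) θTX ω) ≤
        Real.log (μb k (i+1) θTX ω) := by
      intro k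
      set f : Fin K → Fin H → ℝ :=
        fun ℓ θ => if ℓ = k then ψ ℓ (i+1) θ ω else ψh ℓ (i+1) θ ω with hfdef
      have hfpos : ∀ ℓ θ, 0 < f ℓ θ := by
        intro ℓ θ
        by_cases h : ℓ = k
        · simp only [hfdef, if_pos h]; exact hψpos' ℓ θ ω
        · simp only [hfdef, if_neg h]; exact hψhpos' ℓ θ ω
      have hfsum : ∀ ℓ, ∑ θ', f ℓ θ' = 1 := by
        intro ℓ
        by_cases h : ℓ = k
        · simp only [hfdef, if_pos h]; exact hψsum' ℓ ω
        · simp only [hfdef, if_neg h]; exact hψhsum' ℓ ω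
      have hS : ∀ θ, a k k * Real.log (ψ k (i+1) θ ω) +
          ∑ ℓ ∈ Finset.univ.erase k, a ℓ k * Real.log (ψh ℓ (i+1) θ ω) =
          ∑ ℓ, a ℓ k * Real.log (f ℓ θ) := by
        intro θ
        rw [← Finset.add_sum_erase Finset.univ (fun ℓ => a ℓ k * Real.log (f ℓ θ))
          (Finset.mem_univ k)]
        congr 1
        · simp only [hfdef, if_pos rfl]
        · refine Finset.sum_congr rfl fun ℓ hℓ => ?_
          simp only [hfdef, if_neg (Finset.ne_of_mem_erase hℓ)]
      have hAM : ∑ θ', Real.exp (∑ ℓ, a ℓ k * Real.log (f ℓ θ')) ≤ 1 := by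
        calc ∑ θ', Real.exp (∑ ℓ, a ℓ k * Real.log (f ℓ θ'))
            ≤ ∑ θ', ∑ ℓ, a ℓ k * f ℓ θ' := Finset.sum_le_sum fun θ' _ =>
              sw_exp_sum_le Finset.univ (fun ℓ => a ℓ k) (fun ℓ => f ℓ θ')
                (fun ℓ _ => ha_nonneg ℓ k) (ha_stoch k) (fun ℓ _ => hfpos ℓ θ')
          _ = ∑ ℓ, a ℓ k * ∑ θ', f ℓ θ' := by
              rw [Finset.sum_comm]
              exact Finset.sum_congr rfl fun ℓ _ => by rw [Finset.mul_sum]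
          _ = ∑ ℓ, a ℓ k := Finset.sum_congr rfl fun ℓ _ => by rw [hfsum ℓ, mul_one]
          _ = 1 := ha_stoch k
      have hdenpos : 0 < ∑ θ', Real.exp (a k k * Real.log (ψ k (i+1) θ' ω) +
          ∑ ℓ ∈ Finset.univ.erase k, a ℓ k * Real.log (ψh ℓ (i+1) θ' ω)) :=
        Finset.sum_pos (fun θ _ => Real.exp_pos _) ⟨θTX, Finset.mem_univ _⟩
      have hlogden : Real.log (∑ θ', Real.exp (a k k * Real.log (ψ k (i+1) θ' ω) +
          ∑ ℓ ∈ Finset.univ.erase k, a ℓ k * Real.log (ψh ℓ (i+1) θ' ω))) ≤ 0 := by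
        apply Real.log_nonpos hdenpos.le
        calc ∑ θ', Real.exp (a k k * Real.log (ψ k (i+1) θ' ω) +
              ∑ ℓ ∈ Finset.univ.erase k, a ℓ k * Real.log (ψh ℓ (i+1) θ' ω))
            = ∑ θ', Real.exp (∑ ℓ, a ℓ k * Real.log (f ℓ θ')) :=
              Finset.sum_congr rfl fun θ' _ => by rw [hS θ']
          _ ≤ 1 := hAM
      rw [hcomb k i θTX ω, Real.log_div (Real.exp_ne_zero _) hdenpos.ne', Real.log_exp]
      have hfθ0 : ∑ ℓ, a ℓ k * Real.log (f ℓ θTX) =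
          ∑ ℓ, a ℓ k * Real.log (ψ ℓ (i+1) θTX ω) := by
        refine Finset.sum_congr rfl fun ℓ _ => ?_
        by_cases h : ℓ = k
        · simp only [hfdef, if_pos h]
        · simp only [hfdef, if_neg h, hψh_tx ℓ i ω]
      linarith [hS θTX, hfθ0, hlogden]
    have stepB : ∑ ℓ, v ℓ * Real.log (ψ ℓ (i+1) θTX ω) ≤
        ∑ k, v k * Real.log (μb k (i+1) θTX ω) := by
      have h1 : ∑ ℓ, v ℓ * Real.log (ψ ℓ (i+1) θTX ω) =
          ∑ k, v k * ∑ ℓ, a ℓ k * Real.log (ψ ℓ (i+1) θTX ω) := by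
        have h2 : ∀ ℓ, v ℓ * Real.log (ψ ℓ (i+1) θTX ω) =
            ∑ k, v k * (a ℓ k * Real.log (ψ ℓ (i+1) θTX ω)) := by
          intro ℓ
          calc v ℓ * Real.log (ψ ℓ (i+1) θTX ω)
              = (∑ k, a ℓ k * v k) * Real.log (ψ ℓ (i+1) θTX ω) := by rw [hv_eig ℓ]
            _ = ∑ k, (a ℓ k * v k) * Real.log (ψ ℓ (i+1) θTX ω) := by rw [Finset.sum_mul]
            _ = ∑ k, v k * (a ℓ k * Real.log (ψ ℓ (i+1) θTX ω)) :=
                Finset.sum_congr rfl fun k _ => by ring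
        rw [Finset.sum_congr rfl fun ℓ _ => h2 ℓ, Finset.sum_comm]
        exact Finset.sum_congr rfl fun k _ => by rw [Finset.mul_sum]
      rw [h1]
      exact Finset.sum_le_sum fun k _ => mul_le_mul_of_nonneg_left (stepA k) (hv_pos k).le
    have stepC : ∀ k, Real.log (ψ k (i+1) θTX ω) = Real.log (μb k i θTX ω) +
        Real.log (L k θTX (ξ k (i+1) ω) / ∑ θ', μb k i θ' ω * L k θ' (ξ k (i+1) ω)) := by
      intro k
      rw [hψ k i θTX ω,
        Real.log_div (mul_pos (hμpos i k θTX ω) (hLpos k θTX _)).ne' (hden k).ne',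
        Real.log_mul (hμpos i k θTX ω).ne' (hLpos k θTX _).ne',
        Real.log_div (hLpos k θTX _).ne' (hden k).ne']
      ring
    have hsum : (∑ k, v k * Real.log (μb k i θTX ω)) +
        (∑ k, v k * Real.log (L k θTX (ξ k (i+1) ω) /
          ∑ θ', μb k i θ' ω * L k θ' (ξ k (i+1) ω))) =
        ∑ ℓ, v ℓ * Real.log (ψ ℓ (i+1) θTX ω) := by
      rw [← Finset.sum_add_distrib]
      exact Finset.sum_congr rfl fun k _ => by rw [stepC k]; ring
    rw [hsum]
    exact stepB

  -- nonpositivity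
  have hm_nonpos : ∀ i ω, (∑ k, v k * Real.log (μb k i θTX ω)) ≤ 0 := by
    intro i ω
    apply Finset.sum_nonpos
    intro k _
    exact mul_nonpos_of_nonneg_of_nonpos (hv_pos k).le
      (Real.log_nonpos (hμpos i k θTX ω).le (hμle1 i k θTX ω))
  -- ## Step 4 : integrability infrastructure
  set ρ : (k : Fin K) → Measure (X k) :=
    fun k => (ν k).withDensity (fun x => ENNReal.ofReal (L k θTX x)) with hρdef
  have hD_int : ∀ k, Integrable (fun x => ∑ θ', |Real.log (L k θTX x / L k θ' x)|) (ρ k) := by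
    intro k
    refine integrable_finset_sum _ fun θ' _ => ?_
    simp only [hρdef]
    rw [sw_integrable_withDensity (ν k) (L k θTX) (hLpos k θTX) (hLmeas k θTX)]
    have e : (fun x => L k θTX x * |Real.log (L k θTX x / L k θ' x)|) =
        fun x => |L k θTX x * Real.log (L k θTX x / L k θ' x)| := by
      funext x; rw [abs_mul, abs_of_pos (hLpos k θTX x)]
    rw [e]
    exact (hKL k θTX θ').abs
  have hDmeas : ∀ k, Measurable (fun x => ∑ θ', |Real.log (L k θTX x / L k θ' x)|) :=
    fun k => Finset.measurable_sum _ fun θ' _ => ((hLmeas k θTX).div (hLmeas k θ')).log.abs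
  have hlogq_meas : ∀ k (y : Fin H → ℝ),
      Measurable (fun x => Real.log (L k θTX x / ∑ θ', y θ' * L k θ' x)) := fun k y =>
    ((hLmeas k θTX).div (Finset.measurable_sum _ fun θ' _ => (hLmeas k θ').const_mul _)).log
  have hlogq_int : ∀ k (y : Fin H → ℝ), (∀ θ, 0 < y θ) → (∑ θ, y θ = 1) →
      Integrable (fun x => Real.log (L k θTX x / ∑ θ', y θ' * L k θ' x)) (ρ k) := by
    intro k y hy hy1
    refine (hD_int k).mono' (hlogq_meas k y).aestronglyMeasurable (ae_of_all _ fun x => ?_)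
    rw [Real.norm_eq_abs]
    exact sw_log_ratio_bound (fun θ => L k θ x) (fun θ => hLpos k θ x) θTX y hy hy1
  have hcomp_int : ∀ k (j : ℕ), 1 ≤ j → ∀ (g : X k → ℝ), Measurable g → Integrable g (ρ k) →
      Integrable (fun ω => g (ξ k j ω)) P := by
    intro k j hj g hgm hgi
    have h1 : Integrable g (Measure.map (ξ k j) P) := by
      rw [hξdist k j hj]; exact hgi
    exact (integrable_map_measure hgm.aestronglyMeasurable (hξmeas k j).aemeasurable).1 h1
  have hcomp_eq : ∀ k (j : ℕ), 1 ≤ j → ∀ (g : X k → ℝ), Measurable g →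
      ∫ ω, g (ξ k j ω) ∂P = ∫ x, g x ∂(ρ k) := by
    intro k j hj g hgm
    simp only [hρdef]
    rw [← hξdist k j hj]
    exact (integral_map (hξmeas k j).aemeasurable hgm.aestronglyMeasurable).symm
  -- ## Step 5 : the innovation term Z
  have hZmeas : ∀ i : ℕ, Measurable (fun ω => ∑ k, v k * Real.log (L k θTX (ξ k (i+1) ω) /
      ∑ θ', μb k i θ' ω * L k θ' (ξ k (i+1) ω))) := by
    intro i
    refine Finset.measurable_sum _ fun k _ => Measurable.const_mul ?_ _
    exact (((hLmeas k θTX).comp (hξmeas k (i+1))).div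
      (Finset.measurable_sum _ fun θ' _ =>
        (hμmeas i k θ').mul ((hLmeas k θ').comp (hξmeas k (i+1))))).log
  have hZbound : ∀ (i : ℕ) ω, ‖∑ k, v k * Real.log (L k θTX (ξ k (i+1) ω) /
      ∑ θ', μb k i θ' ω * L k θ' (ξ k (i+1) ω))‖ ≤
      ∑ k, v k * ∑ θ', |Real.log (L k θTX (ξ k (i+1) ω) / L k θ' (ξ k (i+1) ω))| := by
    intro i ω
    rw [Real.norm_eq_abs]
    refine le_trans (Finset.abs_sum_le_sum_abs _ _) (Finset.sum_le_sum fun k _ => ?_)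
    rw [abs_mul, abs_of_pos (hv_pos k)]
    refine mul_le_mul_of_nonneg_left ?_ (hv_pos k).le
    exact sw_log_ratio_bound (fun θ => L k θ (ξ k (i+1) ω)) (fun θ => hLpos k θ _) θTX
      (fun θ => μb k i θ ω) (fun θ => hμpos i k θ ω) (hμsum i k ω)
  have hZint : ∀ i : ℕ, Integrable (fun ω => ∑ k, v k * Real.log (L k θTX (ξ k (i+1) ω) /
      ∑ θ', μb k i θ' ω * L k θ' (ξ k (i+1) ω))) P := by
    intro i
    refine Integrable.mono' ?_ (hZmeas i).aestronglyMeasurable (ae_of_all _ (hZbound i))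
    exact integrable_finset_sum _ fun k _ =>
      (hcomp_int k (i+1) (Nat.le_add_left 1 i) _ (hDmeas k) (hD_int k)).const_mul _
  -- ## Step 6 : integrability of m i
  have hmeasωF : ∀ i : ℕ, Measurable[F i] (fun ω => ∑ k, v k * Real.log (μb k i θTX ω)) :=
    fun i => Finset.measurable_sum _ fun k _ => ((hμFmeas i k θTX).log).const_mul _
  have hmint : ∀ i : ℕ, Integrable (fun ω => ∑ k, v k * Real.log (μb k i θTX ω)) P := by
    intro i
    induction i with
    | zero =>
      have e : (fun ω => ∑ k, v k * Real.log (μb k 0 θTX ω)) =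
          fun _ => ∑ k, v k * Real.log (μinit k θTX) := funext fun ω => by simp only [hμb0]
      rw [e]; exact integrable_const _
    | succ i ih =>
      have hS : Integrable (fun ω => (∑ k, v k * Real.log (μb k i θTX ω)) +
          ∑ k, v k * Real.log (L k θTX (ξ k (i+1) ω) /
            ∑ θ', μb k i θ' ω * L k θ' (ξ k (i+1) ω))) P := ih.add (hZint i)
      refine Integrable.mono hS ((Finset.measurable_sum _ fun k _ =>
        ((hμmeas (i+1) k θTX).log).const_mul _).aestronglyMeasurable)
        (ae_of_all _ fun ω => ?_)
      rw [Real.norm_eq_abs, Real.norm_eq_abs, abs_of_nonpos (hm_nonpos (i+1) ω)]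
      have h1 := key i ω
      calc -(∑ k, v k * Real.log (μb k (i+1) θTX ω)) ≤
          -((∑ k, v k * Real.log (μb k i θTX ω)) +
            ∑ k, v k * Real.log (L k θTX (ξ k (i+1) ω) /
              ∑ θ', μb k i θ' ω * L k θ' (ξ k (i+1) ω))) := by linarith
        _ ≤ |(∑ k, v k * Real.log (μb k i θTX ω)) +
            ∑ k, v k * Real.log (L k θTX (ξ k (i+1) ω) /
              ∑ θ', μb k i θ' ω * L k θ' (ξ k (i+1) ω))| := neg_le_abs _
  -- ## Step 7 : independence of the new observation from the past
  have hindepF : ∀ i : ℕ, Indep (F i)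
      (MeasurableSpace.pi.comap (fun ω (k : Fin K) => ξ k (i+1) ω)) P := by
    intro i
    have h_le : ∀ j : ℕ, MeasurableSpace.pi.comap (fun ω (k : Fin K) => ξ k (j+1) ω) ≤ mΩ :=
      fun j => (measurable_pi_lambda _ fun k => hξmeas k (j+1)).comap_le
    have hbig := indep_biSup_compl h_le hξindep.iIndep ({i}ᶜ)
    rw [compl_compl] at hbig
    have hsing : (⨆ j ∈ ({i} : Set ℕ),
        MeasurableSpace.pi.comap (fun ω (k : Fin K) => ξ k (j+1) ω)) =
        MeasurableSpace.pi.comap (fun ω (k : Fin K) => ξ k (i+1) ω) := by simp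
    rw [hsing] at hbig
    refine indep_of_indep_of_le_left hbig ?_
    rw [hF i]
    refine iSup_le fun k => iSup_le fun j => iSup_le fun hj => ?_
    obtain ⟨hj1, hj2⟩ := Finset.mem_Icc.1 hj
    obtain ⟨j', rfl⟩ : ∃ j', j = j' + 1 := ⟨j - 1, by omega⟩
    have hjeq : ξ k (j'+1) = (fun (x : ∀ k', X k') => x k) ∘
        (fun ω (k' : Fin K) => ξ k' (j'+1) ω) := rfl
    calc MeasurableSpace.comap (ξ k (j'+1)) inferInstance
        = MeasurableSpace.comap (fun ω (k' : Fin K) => ξ k' (j'+1) ω)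
            (MeasurableSpace.comap (fun (x : ∀ k', X k') => x k) inferInstance) := by
          rw [hjeq, MeasurableSpace.comap_comp]
      _ ≤ MeasurableSpace.comap (fun ω (k' : Fin K) => ξ k' (j'+1) ω) MeasurableSpace.pi :=
          MeasurableSpace.comap_mono (measurable_pi_apply k).comap_le
      _ ≤ ⨆ j'' ∈ ({i}ᶜ : Set ℕ),
            MeasurableSpace.pi.comap (fun ω (k' : Fin K) => ξ k' (j''+1) ω) := by
          refine le_biSup
            (f := fun j'' => MeasurableSpace.pi.comap (fun ω (k' : Fin K) => ξ k' (j''+1) ω)) ?_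
          simp only [Set.mem_compl_iff, Set.mem_singleton_iff]
          omega
  -- ## Step 8 : part 1
  have part1 : ∀ i : ℕ,
      (fun ω => (∑ k, v k * Real.log (μb k i θTX ω)) +
          ∑ k, v k * ∫ ω', Real.log (L k θTX (ξ k 1 ω') /
            ∑ θ', μb k i θ' ω * L k θ' (ξ k 1 ω')) ∂P)
        ≤ᵐ[P] P[(fun ω => ∑ k, v k * Real.log (μb k (i + 1) θTX ω)) | F i] := by
    intro i
    have hYF : Measurable[F i] (fun ω (k : Fin K) (θ : Fin H) => μb k i θ ω) := by
      letI : MeasurableSpace Ω := F i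
      refine measurable_pi_iff.mpr fun k => measurable_pi_iff.mpr fun θ => hμFmeas i k θ
    have hXm : Measurable (fun ω (k : Fin K) => ξ k (i+1) ω) :=
      measurable_pi_lambda _ fun k => hξmeas k (i+1)
    have hgm : Measurable (Function.uncurry
        (fun (y : Fin K → Fin H → ℝ) (x : ∀ k, X k) =>
          ∑ k, v k * Real.log (L k θTX (x k) / ∑ θ', y k θ' * L k θ' (x k)))) := by
      refine Finset.measurable_sum _ fun k _ => Measurable.const_mul ?_ _
      refine Measurable.log (Measurable.div ?_ ?_)
      · exact (hLmeas k θTX).comp ((measurable_pi_apply k).comp measurable_snd)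
      · refine Finset.measurable_sum _ fun θ' _ => Measurable.mul ?_ ?_
        · exact (measurable_pi_apply θ').comp ((measurable_pi_apply k).comp measurable_fst)
        · exact (hLmeas k θ').comp ((measurable_pi_apply k).comp measurable_snd)
    have hcondZ : (fun ω => ∫ ω', (fun (y : Fin K → Fin H → ℝ) (x : ∀ k, X k) =>
          ∑ k, v k * Real.log (L k θTX (x k) / ∑ θ', y k θ' * L k θ' (x k)))
          (fun k θ => μb k i θ ω) (fun k => ξ k (i+1) ω') ∂P) =ᵐ[P]
        P[(fun ω => ∑ k, v k * Real.log (L k θTX (ξ k (i+1) ω) /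
          ∑ θ', μb k i θ' ω * L k θ' (ξ k (i+1) ω))) | F i] :=
      sw_condexp_indep P (F.le i) hYF hXm (hindepF i) hgm (hZint i)
    have hφeq : ∀ ω : Ω, (∫ ω', (fun (y : Fin K → Fin H → ℝ) (x : ∀ k, X k) =>
          ∑ k, v k * Real.log (L k θTX (x k) / ∑ θ', y k θ' * L k θ' (x k)))
          (fun k θ => μb k i θ ω) (fun k => ξ k (i+1) ω') ∂P) =
        ∑ k, v k * ∫ ω', Real.log (L k θTX (ξ k 1 ω') /
            ∑ θ', μb k i θ' ω * L k θ' (ξ k 1 ω')) ∂P := by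
      intro ω
      have hint' : ∀ k : Fin K, Integrable (fun ω' => Real.log (L k θTX (ξ k (i+1) ω') /
          ∑ θ', μb k i θ' ω * L k θ' (ξ k (i+1) ω'))) P :=
        fun k => hcomp_int k (i+1) (Nat.le_add_left 1 i) _
          (hlogq_meas k (fun θ => μb k i θ ω))
          (hlogq_int k (fun θ => μb k i θ ω) (fun θ => hμpos i k θ ω) (hμsum i k ω))
      have h1 : (∫ ω', ∑ k, v k * Real.log (L k θTX (ξ k (i+1) ω') /
          ∑ θ', μb k i θ' ω * L k θ' (ξ k (i+1) ω')) ∂P) =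
          ∑ k, ∫ ω', v k * Real.log (L k θTX (ξ k (i+1) ω') /
            ∑ θ', μb k i θ' ω * L k θ' (ξ k (i+1) ω')) ∂P :=
        integral_finset_sum _ fun k _ => (hint' k).const_mul _
      refine h1.trans (Finset.sum_congr rfl fun k _ => ?_)
      rw [integral_const_mul]
      congr 1
      have e1 : (∫ ω', Real.log (L k θTX (ξ k (i+1) ω') /
          ∑ θ', μb k i θ' ω * L k θ' (ξ k (i+1) ω')) ∂P) =
          ∫ x, Real.log (L k θTX x / ∑ θ', μb k i θ' ω * L k θ' x) ∂(ρ k) :=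
        hcomp_eq k (i+1) (Nat.le_add_left 1 i) _ (hlogq_meas k (fun θ => μb k i θ ω))
      have e2 : (∫ ω', Real.log (L k θTX (ξ k 1 ω') /
          ∑ θ', μb k i θ' ω * L k θ' (ξ k 1 ω')) ∂P) =
          ∫ x, Real.log (L k θTX x / ∑ θ', μb k i θ' ω * L k θ' x) ∂(ρ k) :=
        hcomp_eq k 1 le_rfl _ (hlogq_meas k (fun θ => μb k i θ ω))
      exact e1.trans e2.symm
    have hMint := hmint i
    have hSint : Integrable (fun ω => (∑ k, v k * Real.log (μb k i θTX ω)) +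
        ∑ k, v k * Real.log (L k θTX (ξ k (i+1) ω) /
          ∑ θ', μb k i θ' ω * L k θ' (ξ k (i+1) ω))) P := hMint.add (hZint i)
    have hmono : P[(fun ω => (∑ k, v k * Real.log (μb k i θTX ω)) +
        ∑ k, v k * Real.log (L k θTX (ξ k (i+1) ω) /
          ∑ θ', μb k i θ' ω * L k θ' (ξ k (i+1) ω))) | F i] ≤ᵐ[P]
        P[(fun ω => ∑ k, v k * Real.log (μb k (i + 1) θTX ω)) | F i] :=
      condExp_mono hSint (hmint (i+1)) (ae_of_all _ fun ω => key i ω)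
    have hadd : P[(fun ω => (∑ k, v k * Real.log (μb k i θTX ω)) +
        ∑ k, v k * Real.log (L k θTX (ξ k (i+1) ω) /
          ∑ θ', μb k i θ' ω * L k θ' (ξ k (i+1) ω))) | F i] =ᵐ[P]
        (fun ω => (P[(fun ω => ∑ k, v k * Real.log (μb k i θTX ω)) | F i]) ω +
          (P[(fun ω => ∑ k, v k * Real.log (L k θTX (ξ k (i+1) ω) /
            ∑ θ', μb k i θ' ω * L k θ' (ξ k (i+1) ω))) | F i]) ω) :=
      condExp_add hMint (hZint i) (F i)
    have hproj : P[(fun ω => ∑ k, v k * Real.log (μb k i θTX ω)) | F i] =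
        fun ω => ∑ k, v k * Real.log (μb k i θTX ω) :=
      condExp_of_stronglyMeasurable (F.le i) (hmeasωF i).stronglyMeasurable hMint
    filter_upwards [hcondZ, hmono, hadd] with ω h1 h2 h3
    have h4 := congrFun hproj ω
    have h5 := hφeq ω
    rw [← h5, ← h4]
    rw [h1]
    rw [h3] at h2
    linarith
  -- ## Step 9 : nonnegativity of the drift (Gibbs)
  have hφnonneg : ∀ (i : ℕ) (ω : Ω), 0 ≤ ∑ k, v k * ∫ ω', Real.log (L k θTX (ξ k 1 ω') /
      ∑ θ', μb k i θ' ω * L k θ' (ξ k 1 ω')) ∂P := by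
    intro i ω
    refine Finset.sum_nonneg fun k _ => mul_nonneg (hv_pos k).le ?_
    have e1 : (∫ ω', Real.log (L k θTX (ξ k 1 ω') /
        ∑ θ', μb k i θ' ω * L k θ' (ξ k 1 ω')) ∂P) =
        ∫ x, Real.log (L k θTX x / ∑ θ', μb k i θ' ω * L k θ' x) ∂(ρ k) :=
      hcomp_eq k 1 le_rfl _ (hlogq_meas k (fun θ => μb k i θ ω))
    have e2 : (∫ x, Real.log (L k θTX x / ∑ θ', μb k i θ' ω * L k θ' x) ∂(ρ k)) =
        ∫ x, L k θTX x * Real.log (L k θTX x / ∑ θ', μb k i θ' ω * L k θ' x) ∂(ν k) := by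
      simp only [hρdef]
      exact sw_integral_withDensity (ν k) (L k θTX) (hLpos k θTX) (hLmeas k θTX) _
    have hint2 : Integrable (fun x => L k θTX x *
        Real.log (L k θTX x / ∑ θ', μb k i θ' ω * L k θ' x)) (ν k) := by
      rw [← sw_integrable_withDensity (ν k) (L k θTX) (hLpos k θTX) (hLmeas k θTX)]
      exact hlogq_int k (fun θ => μb k i θ ω) (fun θ => hμpos i k θ ω) (hμsum i k ω)
    rw [e1, e2]
    exact sw_gibbs (ν k) (L k) θTX (hLpos k) (hLdens k)
      (fun θ => μb k i θ ω) (fun θ => hμpos i k θ ω) (hμsum i k ω) hint2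
  -- ## Step 10 : assemble
  have hadapted : StronglyAdapted F (fun (i : ℕ) ω => ∑ k, v k * Real.log (μb k i θTX ω)) :=
    fun i => (hmeasωF i).stronglyMeasurable
  have hsub : Submartingale (fun (i : ℕ) ω => ∑ k, v k * Real.log (μb k i θTX ω)) F P := by
    refine submartingale_nat hadapted hmint fun i => ?_
    refine EventuallyLE.trans (ae_of_all _ fun ω => ?_) (part1 i)
    exact le_add_of_nonneg_right (hφnonneg i ω)
  exact ⟨part1, hsub, fun i => ae_of_all _ (hm_nonpos i)⟩
end
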